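/- arXiv:2510.10898 — 4 statements merged into one kernel-verified Lean document; each statement's English description precedes it below -/
import Mathlib

section
/- Let α ∈ (0,2) and p ∈ (0,1) with αp < 1. Then ((1−p)/p)·Σ_{k=1}^∞ k^α·B(k, 1+1/p) = ∫_0^{1−p} f(x) dx, where f(x) = Σ_{k=1}^∞ k^α·(1−(x/(1−p))^p)^{k−1}·(x/(1−p))^p for x ∈ [0, 1−p), both sides being finite. -/
open MeasureTheory Filter Finset Topology

/-- The Beta function `B(a,b) = ∫_0^1 x^(a-1) (1-x)^(b-1) dx`. -/
noncomputable def Beta (a b : ℝ) : ℝ :=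
  ∫ x in (0:ℝ)..1, x ^ (a - 1) * (1 - x) ^ (b - 1)

open scoped ENNReal NNReal

lemma two_choose (k : ℕ) : 2 * ((k+2).choose 2) = (k+1) * (k+2) := by
  have h : 2 ∣ (k+2) * (k+1) := by
    have h2 := (Nat.even_mul_succ_self (k+1)).two_dvd
    rwa [mul_comm] at h2
  rw [Nat.choose_two_right, show k+2-1 = k+1 from rfl, Nat.mul_div_cancel' h, mul_comm]

lemma hasSum_sq {s : ℝ} (hs : |s| < 1) :
    HasSum (fun k : ℕ => (((k:ℝ)+1) * ((k:ℝ)+2)) * s ^ k) (2 / (1-s)^3) := by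
  have h := (hasSum_choose_mul_geometric_of_norm_lt_one 2 (r := s)
    (by simpa [Real.norm_eq_abs] using hs)).mul_left 2
  have hf : (fun k : ℕ => (((k:ℝ)+1) * ((k:ℝ)+2)) * s ^ k)
      = fun n : ℕ => 2 * ((((n+2).choose 2 : ℕ) : ℝ) * s ^ n) := by
    funext k
    have hc : 2 * (((k+2).choose 2 : ℕ) : ℝ) = ((k:ℝ)+1) * ((k:ℝ)+2) := by
      exact_mod_cast two_choose k
    rw [← hc]; ring
  have hv : (2:ℝ) / (1-s)^3 = 2 * (1 / (1-s)^(2+1)) := by norm_num [div_eq_mul_inv]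
  rw [hf, hv]
  exact h

lemma keySum (α : ℝ) (hα0 : 0 ≤ α) (hα2 : α ≤ 2) {s : ℝ} (hs0 : 0 ≤ s) (hs1 : s < 1) :
    Summable (fun k : ℕ => ((k:ℝ)+1) ^ α * s ^ k) ∧
    ∑' k : ℕ, ((k:ℝ)+1) ^ α * s ^ k ≤ 3 * (1-s) ^ (-(α+1)) := by
  set t : ℝ := 1 - s with ht
  have ht0 : 0 < t := by simp only [ht]; linarith
  have habs : |s| < 1 := abs_lt.2 ⟨by linarith, hs1⟩
  set g : ℕ → ℝ := fun k =>
    t ^ (-α) * (s ^ k + t^2 * ((((k:ℝ)+1) * ((k:ℝ)+2)) * s ^ k)) with hg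
  have hbound : ∀ k : ℕ, ((k:ℝ)+1) ^ α * s ^ k ≤ g k := by
    intro k
    have hsk : (0:ℝ) ≤ s ^ k := pow_nonneg hs0 k
    have hk1 : (0:ℝ) ≤ (k:ℝ)+1 := by positivity
    have hu : (0:ℝ) ≤ t * ((k:ℝ)+1) := by positivity
    have h1 : (t * ((k:ℝ)+1)) ^ α ≤ 1 + (t * ((k:ℝ)+1))^2 := by
      rcases le_or_gt (t * ((k:ℝ)+1)) 1 with h | h
      · have := Real.rpow_le_one hu h hα0
        nlinarith [sq_nonneg (t * ((k:ℝ)+1))]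
      · have h2 : (t * ((k:ℝ)+1)) ^ α ≤ (t * ((k:ℝ)+1)) ^ (2:ℝ) :=
          Real.rpow_le_rpow_of_exponent_le h.le hα2
        rw [show (2:ℝ) = ((2:ℕ):ℝ) by norm_num, Real.rpow_natCast] at h2
        linarith
    have heq : ((k:ℝ)+1) ^ α = t ^ (-α) * (t * ((k:ℝ)+1)) ^ α := by
      rw [Real.mul_rpow ht0.le hk1, ← mul_assoc, ← Real.rpow_add ht0]
      simp
    have h3 : (t * ((k:ℝ)+1))^2 ≤ t^2 * (((k:ℝ)+1) * ((k:ℝ)+2)) := by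
      nlinarith [sq_nonneg t]
    have htα : (0:ℝ) ≤ t ^ (-α) := (Real.rpow_pos_of_pos ht0 _).le
    calc ((k:ℝ)+1) ^ α * s ^ k
        = (t ^ (-α) * (t * ((k:ℝ)+1)) ^ α) * s ^ k := by rw [heq]
      _ ≤ (t ^ (-α) * (1 + t^2 * (((k:ℝ)+1) * ((k:ℝ)+2)))) * s ^ k := by
          apply mul_le_mul_of_nonneg_right _ hsk
          apply mul_le_mul_of_nonneg_left _ htα
          linarith
      _ = g k := by simp only [hg]; ring
  have h1 : HasSum (fun k : ℕ => s ^ k) t⁻¹ := by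
    simpa only [ht] using hasSum_geometric_of_lt_one hs0 hs1
  have h2 : HasSum (fun k : ℕ => t^2 * ((((k:ℝ)+1) * ((k:ℝ)+2)) * s ^ k))
      (t^2 * (2 / t^3)) := (hasSum_sq habs).mul_left _
  have hgsum : HasSum g (t ^ (-α) * (t⁻¹ + t^2 * (2 / t^3))) := (h1.add h2).mul_left _
  have hnn : ∀ k : ℕ, 0 ≤ ((k:ℝ)+1) ^ α * s ^ k := by
    intro k
    have : (0:ℝ) < (k:ℝ)+1 := by positivity
    positivity
  have hsummable : Summable (fun k : ℕ => ((k:ℝ)+1) ^ α * s ^ k) :=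
    Summable.of_nonneg_of_le hnn hbound hgsum.summable
  refine ⟨hsummable, ?_⟩
  calc ∑' k : ℕ, ((k:ℝ)+1) ^ α * s ^ k
      ≤ ∑' k, g k := hsummable.tsum_le_tsum hbound hgsum.summable
    _ = t ^ (-α) * (t⁻¹ + t^2 * (2 / t^3)) := hgsum.tsum_eq
    _ = 3 * t ^ (-(α+1)) := by
        rw [show -(α+1) = -α + (-1) by ring, Real.rpow_add ht0, Real.rpow_neg_one]
        field_simp
        ring

lemma betaInt (p : ℝ) (hp : 0 < p) (hp1 : p < 1) (k : ℕ) :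
    (∫ x in (0:ℝ)..(1-p), (1 - (x/(1-p))^p)^k * (x/(1-p))^p)
      = (1-p)/p * Beta ((k:ℝ)+1) (1+1/p) := by
  have hc : (0:ℝ) < 1 - p := by linarith
  have hcont_p : Continuous fun u : ℝ => u ^ p := Real.continuous_rpow_const hp.le
  have step1 : (∫ x in (0:ℝ)..(1-p), (1 - (x/(1-p))^p)^k * (x/(1-p))^p)
      = (1-p) * ∫ u in (0:ℝ)..1, (1 - u^p)^k * u^p := by
    have h := intervalIntegral.integral_comp_div
      (f := fun u => (1 - u^p)^k * u^p) (a := 0) (b := 1-p) (c := 1-p) hc.ne'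
    rw [h, zero_div, div_self hc.ne', smul_eq_mul]
  have hgcont : Continuous fun u : ℝ => p * ((1 - u^p)^k * u^p) :=
    continuous_const.mul (((continuous_const.sub hcont_p).pow k).mul hcont_p)
  have h1p : 1 ≤ 1/p := one_le_one_div hp hp1.le
  have step2 : (∫ v in (0:ℝ)..1,
        (1/p * v^(1/p - 1)) • (p * ((1 - (v^(1/p))^p)^k * (v^(1/p))^p)))
      = ∫ u in (0:ℝ)..1, p * ((1 - u^p)^k * u^p) := by
    have h := intervalIntegral.integral_comp_smul_deriv
      (f := fun v : ℝ => v ^ (1/p)) (f' := fun v : ℝ => 1/p * v ^ (1/p - 1))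
      (g := fun u => p * ((1 - u^p)^k * u^p)) (a := 0) (b := 1)
      (fun x _ => Real.hasDerivAt_rpow_const (Or.inr h1p))
      ((continuous_const.mul (Real.continuous_rpow_const (by linarith))).continuousOn)
      hgcont
    simp only [Function.comp] at h
    rw [h, Real.zero_rpow (by positivity), Real.one_rpow]
  have step3 : (∫ v in (0:ℝ)..1,
        (1/p * v^(1/p - 1)) • (p * ((1 - (v^(1/p))^p)^k * (v^(1/p))^p)))
      = ∫ v in (0:ℝ)..1, (1-v)^k * v^(1/p) := by
    apply intervalIntegral.integral_congr
    intro v hv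
    rw [Set.uIcc_of_le (by norm_num : (0:ℝ) ≤ 1)] at hv
    have hv0 : (0:ℝ) ≤ v := hv.1
    have hvp : (v^(1/p))^p = v := by
      rw [← Real.rpow_mul hv0, one_div, inv_mul_cancel₀ hp.ne', Real.rpow_one]
    have hvsplit : v^(1/p) = v^(1/p - 1) * v := by
      nth_rewrite 1 [show (1/p : ℝ) = (1/p - 1) + 1 by ring]
      rw [Real.rpow_add' hv0 (by simpa using one_div_ne_zero hp.ne'), Real.rpow_one]
    simp only [smul_eq_mul, hvp]
    rw [hvsplit]
    field_simp
  have step4 : Beta ((k:ℝ)+1) (1+1/p) = ∫ v in (0:ℝ)..1, (1-v)^k * v^(1/p) := by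
    rw [Beta, show ((k:ℝ)+1-1) = ((k:ℕ):ℝ) by push_cast; ring,
      show (1+1/p-1 : ℝ) = 1/p by ring]
    have h := intervalIntegral.integral_comp_sub_left
      (f := fun x : ℝ => x ^ ((k:ℕ):ℝ) * (1-x)^(1/p)) (a := 0) (b := 1) 1
    norm_num at h
    simp only [Real.rpow_natCast, one_div]
    rw [← h]
  have hpull : (∫ u in (0:ℝ)..1, p * ((1 - u^p)^k * u^p))
      = p * ∫ u in (0:ℝ)..1, (1 - u^p)^k * u^p :=
    intervalIntegral.integral_const_mul _ _
  rw [step1, step4, ← step3, step2, hpull]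
  field_simp

theorem stmt3 (α p : ℝ) (hα : 0 < α) (hα2 : α < 2) (hp : 0 < p) (hp1 : p < 1)
    (hap : α * p < 1) :
    Summable (fun k : ℕ => ((k + 1 : ℝ)) ^ α * Beta (k+1) (1 + 1/p)) ∧
    (∀ x, 0 ≤ x → x < 1 - p →
      Summable (fun k : ℕ =>
        ((k + 1 : ℝ)) ^ α * (1 - (x/(1-p)) ^ p) ^ k * (x/(1-p)) ^ p)) ∧
    IntervalIntegrable
      (fun x => ∑' k : ℕ,
        ((k + 1 : ℝ)) ^ α * (1 - (x/(1-p)) ^ p) ^ k * (x/(1-p)) ^ p)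
      volume 0 (1-p) ∧
    (1 - p)/p * ∑' k : ℕ, ((k + 1 : ℝ)) ^ α * Beta (k+1) (1 + 1/p)
      = ∫ x in (0:ℝ)..(1-p), ∑' k : ℕ,
          ((k + 1 : ℝ)) ^ α * (1 - (x/(1-p)) ^ p) ^ k * (x/(1-p)) ^ p := by
  have hc : (0:ℝ) < 1 - p := by linarith
  have h0c : (0:ℝ) ≤ 1 - p := hc.le
  -- basic facts about T x = (x/(1-p))^p on Ioc 0 (1-p)
  have hmem : ∀ x ∈ Set.Ioc (0:ℝ) (1-p), 0 < (x/(1-p))^p ∧ (x/(1-p))^p ≤ 1 := by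
    intro x hx
    constructor
    · exact Real.rpow_pos_of_pos (div_pos hx.1 hc) p
    · exact Real.rpow_le_one (div_nonneg hx.1.le hc.le) ((div_le_one hc).2 hx.2) hp.le
  -- summability of the inner series
  have hsum_inner : ∀ x ∈ Set.Ioc (0:ℝ) (1-p),
      Summable (fun k : ℕ => ((k:ℝ)+1) ^ α * (1 - (x/(1-p))^p) ^ k) := by
    intro x hx
    exact (keySum α hα.le hα2.le (by linarith [(hmem x hx).2])
      (by linarith [(hmem x hx).1])).1
  have hsum_full : ∀ x ∈ Set.Ioc (0:ℝ) (1-p),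
      Summable (fun k : ℕ => ((k:ℝ)+1) ^ α * (1 - (x/(1-p))^p) ^ k * (x/(1-p))^p) :=
    fun x hx => (hsum_inner x hx).mul_right _
  -- pointwise bound on the sum
  have htsum_bound : ∀ x ∈ Set.Ioc (0:ℝ) (1-p),
      (∑' k : ℕ, ((k:ℝ)+1) ^ α * (1 - (x/(1-p))^p) ^ k * (x/(1-p))^p)
        ≤ 3 * (x/(1-p)) ^ (p * (-α)) := by
    intro x hx
    obtain ⟨ht0, ht1⟩ := hmem x hx
    set t : ℝ := (x/(1-p))^p with htdef
    have hkey := (keySum α hα.le hα2.le (s := 1 - t) (by linarith) (by linarith)).2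
    rw [show (1 - (1 - t) : ℝ) = t by ring] at hkey
    have e1 : (∑' k : ℕ, ((k:ℝ)+1) ^ α * (1 - t) ^ k * t)
        = (∑' k : ℕ, ((k:ℝ)+1) ^ α * (1 - t) ^ k) * t := tsum_mul_right
    rw [e1]
    have e2 : (3 * t ^ (-(α+1))) * t = 3 * t ^ (-α) := by
      rw [show (-α : ℝ) = -(α+1) + 1 by ring, Real.rpow_add ht0, Real.rpow_one]
      ring
    have e3 : t ^ (-α) = (x/(1-p)) ^ (p * (-α)) := by
      rw [htdef, ← Real.rpow_mul (div_nonneg hx.1.le hc.le)]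
    calc (∑' k : ℕ, ((k:ℝ)+1) ^ α * (1 - t) ^ k) * t
        ≤ (3 * t ^ (-(α+1))) * t := mul_le_mul_of_nonneg_right hkey ht0.le
      _ = 3 * t ^ (-α) := e2
      _ = 3 * (x/(1-p)) ^ (p * (-α)) := by rw [e3]
  -- nonnegativity of terms
  have hterm_nonneg : ∀ x ∈ Set.Ioc (0:ℝ) (1-p), ∀ k : ℕ,
      0 ≤ ((k:ℝ)+1) ^ α * (1 - (x/(1-p))^p) ^ k * (x/(1-p))^p := by
    intro x hx k
    obtain ⟨ht0, ht1⟩ := hmem x hx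
    have h1 : (0:ℝ) ≤ ((k:ℝ)+1) ^ α := (Real.rpow_pos_of_pos (by positivity) _).le
    have h2 : (0:ℝ) ≤ (1 - (x/(1-p))^p) ^ k := pow_nonneg (by linarith) k
    positivity
  have hF_nonneg : ∀ x ∈ Set.Ioc (0:ℝ) (1-p),
      0 ≤ ∑' k : ℕ, ((k:ℝ)+1) ^ α * (1 - (x/(1-p))^p) ^ k * (x/(1-p))^p :=
    fun x hx => tsum_nonneg (hterm_nonneg x hx)
  -- continuity of each term
  have hTc : Continuous fun x : ℝ => (x/(1-p))^p :=
    (Real.continuous_rpow_const hp.le).comp (continuous_id.div_const _)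
  have hfc : ∀ k : ℕ, Continuous
      (fun x : ℝ => ((k:ℝ)+1) ^ α * (1 - (x/(1-p))^p) ^ k * (x/(1-p))^p) :=
    fun k => (continuous_const.mul ((continuous_const.sub hTc).pow k)).mul hTc
  have hfint : ∀ k : ℕ, IntegrableOn
      (fun x : ℝ => ((k:ℝ)+1) ^ α * (1 - (x/(1-p))^p) ^ k * (x/(1-p))^p)
      (Set.Ioc 0 (1-p)) volume := fun k => (hfc k).integrableOn_Ioc
  -- the dominating function
  have hGint : IntegrableOn (fun x : ℝ => 3 * (x/(1-p)) ^ (p * (-α)))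
      (Set.Ioc 0 (1-p)) volume := by
    have hexp : (-1:ℝ) < p * (-α) := by nlinarith
    have h1 : IntervalIntegrable (fun y : ℝ => y ^ (p * (-α))) volume 0 1 :=
      intervalIntegral.intervalIntegrable_rpow' hexp
    have h2 := h1.comp_mul_right (c := (1-p)⁻¹)
    rw [zero_div, one_div, inv_inv] at h2
    have h3 : IntervalIntegrable (fun x : ℝ => (x/(1-p)) ^ (p * (-α))) volume 0 (1-p) := by
      simpa [div_eq_mul_inv] using h2
    have h4 := h3.const_mul 3
    rwa [intervalIntegrable_iff_integrableOn_Ioc_of_le h0c] at h4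
  have hae : ∀ᵐ x ∂(volume.restrict (Set.Ioc (0:ℝ) (1-p))), x ∈ Set.Ioc (0:ℝ) (1-p) :=
    ae_restrict_mem measurableSet_Ioc
  -- the lintegral of each term
  have hlint_eq : ∀ k : ℕ,
      (∫⁻ x, ‖((k:ℝ)+1) ^ α * (1 - (x/(1-p))^p) ^ k * (x/(1-p))^p‖₊
        ∂(volume.restrict (Set.Ioc (0:ℝ) (1-p))))
      = ENNReal.ofReal (∫ x in Set.Ioc (0:ℝ) (1-p),
          ((k:ℝ)+1) ^ α * (1 - (x/(1-p))^p) ^ k * (x/(1-p))^p) := by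
    intro k
    have h1 : (∫⁻ x, ‖((k:ℝ)+1) ^ α * (1 - (x/(1-p))^p) ^ k * (x/(1-p))^p‖₊
        ∂(volume.restrict (Set.Ioc (0:ℝ) (1-p))))
        = ∫⁻ x, ENNReal.ofReal (((k:ℝ)+1) ^ α * (1 - (x/(1-p))^p) ^ k * (x/(1-p))^p)
        ∂(volume.restrict (Set.Ioc (0:ℝ) (1-p))) := by
      apply lintegral_congr_ae
      filter_upwards [hae] with x hx
      exact Real.enorm_eq_ofReal (hterm_nonneg x hx k)
    rw [h1, ← ofReal_integral_eq_lintegral_ofReal (hfint k)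
      (by filter_upwards [hae] with x hx using hterm_nonneg x hx k)]
  -- value of each integral
  have hint_val : ∀ k : ℕ,
      (∫ x in Set.Ioc (0:ℝ) (1-p), ((k:ℝ)+1) ^ α * (1 - (x/(1-p))^p) ^ k * (x/(1-p))^p)
      = ((k:ℝ)+1) ^ α * ((1-p)/p * Beta ((k:ℝ)+1) (1+1/p)) := by
    intro k
    rw [← intervalIntegral.integral_of_le h0c]
    simp only [mul_assoc]
    rw [intervalIntegral.integral_const_mul, betaInt p hp hp1 k]
  -- finiteness of the total mass
  have hsum_lint : (∑' k : ℕ, ∫⁻ x, ‖((k:ℝ)+1) ^ α * (1 - (x/(1-p))^p) ^ k * (x/(1-p))^p‖₊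
      ∂(volume.restrict (Set.Ioc (0:ℝ) (1-p)))) ≠ ⊤ := by
    have hswap : (∑' k : ℕ, ∫⁻ x, ‖((k:ℝ)+1) ^ α * (1 - (x/(1-p))^p) ^ k * (x/(1-p))^p‖₊
        ∂(volume.restrict (Set.Ioc (0:ℝ) (1-p))))
        = ∫⁻ x, (∑' k : ℕ, (‖((k:ℝ)+1) ^ α * (1 - (x/(1-p))^p) ^ k * (x/(1-p))^p‖₊ : ℝ≥0∞))
        ∂(volume.restrict (Set.Ioc (0:ℝ) (1-p))) :=
      (lintegral_tsum (fun k => ((hfc k).measurable.nnnorm.coe_nnreal_ennreal).aemeasurable)).symm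
    rw [hswap]
    have hbd : ∫⁻ x, (∑' k : ℕ, (‖((k:ℝ)+1) ^ α * (1 - (x/(1-p))^p) ^ k * (x/(1-p))^p‖₊ : ℝ≥0∞))
        ∂(volume.restrict (Set.Ioc (0:ℝ) (1-p)))
        ≤ ∫⁻ x, ENNReal.ofReal (3 * (x/(1-p)) ^ (p * (-α)))
        ∂(volume.restrict (Set.Ioc (0:ℝ) (1-p))) := by
      apply lintegral_mono_ae
      filter_upwards [hae] with x hx
      have e1 : (∑' k : ℕ, (‖((k:ℝ)+1) ^ α * (1 - (x/(1-p))^p) ^ k * (x/(1-p))^p‖₊ : ℝ≥0∞))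
          = ∑' k : ℕ, ENNReal.ofReal (((k:ℝ)+1) ^ α * (1 - (x/(1-p))^p) ^ k * (x/(1-p))^p) := by
        apply tsum_congr
        intro k
        exact Real.enorm_eq_ofReal (hterm_nonneg x hx k)
      rw [e1, ← ENNReal.ofReal_tsum_of_nonneg (hterm_nonneg x hx) (hsum_full x hx)]
      exact ENNReal.ofReal_le_ofReal (htsum_bound x hx)
    exact (lt_of_le_of_lt hbd hGint.lintegral_lt_top).ne
  -- measurability of the sum
  have hFmeas : AEStronglyMeasurable
      (fun x => ∑' k : ℕ, ((k:ℝ)+1) ^ α * (1 - (x/(1-p))^p) ^ k * (x/(1-p))^p)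
      (volume.restrict (Set.Ioc (0:ℝ) (1-p))) := by
    apply aestronglyMeasurable_of_tendsto_ae (u := atTop)
      (f := fun n x => ∑ k ∈ Finset.range n,
        ((k:ℝ)+1) ^ α * (1 - (x/(1-p))^p) ^ k * (x/(1-p))^p)
    · intro n
      exact (continuous_finset_sum _ (fun k _ => hfc k)).aestronglyMeasurable
    · filter_upwards [hae] with x hx
      exact (hsum_full x hx).hasSum.tendsto_sum_nat
  -- Conjunct 1
  have hsummable_beta : Summable
      (fun k : ℕ => ((k:ℝ) + 1) ^ α * Beta ((k:ℝ)+1) (1 + 1/p)) := by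
    have hS' : (∑' k : ℕ, ENNReal.ofReal
        (((k:ℝ)+1) ^ α * ((1-p)/p * Beta ((k:ℝ)+1) (1+1/p)))) ≠ ⊤ := by
      have e : (∑' k : ℕ, ENNReal.ofReal
          (((k:ℝ)+1) ^ α * ((1-p)/p * Beta ((k:ℝ)+1) (1+1/p))))
          = ∑' k : ℕ, ∫⁻ x, ‖((k:ℝ)+1) ^ α * (1 - (x/(1-p))^p) ^ k * (x/(1-p))^p‖₊
            ∂(volume.restrict (Set.Ioc (0:ℝ) (1-p))) :=
        tsum_congr fun k => (((hlint_eq k).trans (by rw [hint_val k]))).symm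
      rw [e]
      exact hsum_lint
    have hck : ∀ k : ℕ, 0 ≤ ((k:ℝ)+1) ^ α * ((1-p)/p * Beta ((k:ℝ)+1) (1+1/p)) := by
      intro k
      rw [← hint_val k]
      exact setIntegral_nonneg measurableSet_Ioc (fun x hx => hterm_nonneg x hx k)
    have h1 : Summable (fun k : ℕ =>
        ((k:ℝ)+1) ^ α * ((1-p)/p * Beta ((k:ℝ)+1) (1+1/p))) := by
      have h2 := ENNReal.summable_toReal hS'
      refine h2.congr fun k => ?_
      rw [ENNReal.toReal_ofReal (hck k)]
    have h3 := h1.mul_right (p/(1-p))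
    refine h3.congr fun k => ?_
    have hmul : (1-p)/p * (p/(1-p)) = 1 := by field_simp
    calc ((k:ℝ)+1) ^ α * ((1-p)/p * Beta ((k:ℝ)+1) (1+1/p)) * (p/(1-p))
        = ((k:ℝ)+1) ^ α * Beta ((k:ℝ)+1) (1+1/p) * ((1-p)/p * (p/(1-p))) := by ring
      _ = ((k:ℝ)+1) ^ α * Beta ((k:ℝ)+1) (1+1/p) := by rw [hmul, mul_one]
  refine ⟨hsummable_beta, ?_, ?_, ?_⟩
  -- Conjunct 2
  · intro x hx0 hx1
    rcases eq_or_lt_of_le hx0 with hx | hx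
    · simp only [← hx, zero_div, Real.zero_rpow hp.ne', mul_zero]
      exact summable_zero
    · exact hsum_full x ⟨hx, hx1.le⟩
  -- Conjunct 3
  · rw [intervalIntegrable_iff_integrableOn_Ioc_of_le h0c]
    apply Integrable.mono' hGint hFmeas
    filter_upwards [hae] with x hx
    rw [Real.norm_eq_abs, abs_of_nonneg (hF_nonneg x hx)]
    exact htsum_bound x hx
  -- Conjunct 4
  · rw [intervalIntegral.integral_of_le h0c,
      MeasureTheory.integral_tsum (fun k => (hfc k).aestronglyMeasurable) hsum_lint,
      tsum_congr hint_val, ← tsum_mul_left]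
    apply tsum_congr
    intro k
    ring
end

section
/- Suppose (ξ_k)_{k≥1} are i.i.d. standard normal random variables independent of the weights. If (1/√n)·Σ_{k=1}^n W_{nk}·ξ_k converges in distribution to the standard normal law N(0,1), then (1/n)·Σ_{k=1}^n W_{nk}^2 → 1 in probability. -/
open MeasureTheory ProbabilityTheory Filter Finset Topology ENNReal

section GaussAux
open Complex

lemma aux_cexp_int (c : ℝ) :
    ∫ x : ℝ, Complex.exp ((-(1/2) : ℂ) * x ^ 2 + (c * I) * x + 0)
      = (Real.sqrt (2 * Real.pi) : ℂ) * Complex.exp (-(c^2)/2) := by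
  rw [integral_cexp_quadratic (by norm_num : (-(1/2) : ℂ).re < 0) (c * I) 0]
  have h1 : (Real.pi : ℂ) / -(-(1/2)) = (2 * Real.pi : ℝ) := by push_cast; ring
  rw [h1]
  have h2 : ((2 * Real.pi : ℝ) : ℂ) ^ (1/2 : ℂ) = (Real.sqrt (2 * Real.pi) : ℂ) := by
    rw [show ((1/2 : ℂ)) = ((1/2 : ℝ) : ℂ) by norm_num,
      ← Complex.ofReal_cpow (by positivity), Complex.ofReal_inj, Real.rpow_def_of_pos
        (by positivity), Real.sqrt_eq_rpow, Real.rpow_def_of_pos (by positivity)]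
  rw [h2]
  congr 1
  have : ((c : ℂ) * I) ^ 2 = -(c^2 : ℝ) := by
    push_cast; rw [mul_pow, I_sq]; ring
  rw [this]
  push_cast
  congr 1
  ring

lemma aux_integrable_cexp (c : ℝ) :
    Integrable (fun x : ℝ => Complex.exp ((-(1/2) : ℂ) * x ^ 2 + (c * I) * x + 0)) :=
  integrable_cexp_quadratic' (by norm_num) _ _

lemma aux_re (c : ℝ) (x : ℝ) :
    (Complex.exp ((-(1/2) : ℂ) * x ^ 2 + (c * I) * x + 0)).re
      = Real.exp (-(x^2)/2) * Real.cos (c * x) := by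
  rw [Complex.exp_re]
  have h1 : ((-(1/2) : ℂ) * x ^ 2 + (c * I) * x + 0).re = -(x^2)/2 := by
    simp [← Complex.ofReal_pow]; ring
  have h2 : ((-(1/2) : ℂ) * x ^ 2 + (c * I) * x + 0).im = c * x := by
    simp [← Complex.ofReal_pow]
  rw [h1, h2]

lemma aux_im (c : ℝ) (x : ℝ) :
    (Complex.exp ((-(1/2) : ℂ) * x ^ 2 + (c * I) * x + 0)).im
      = Real.exp (-(x^2)/2) * Real.sin (c * x) := by
  rw [Complex.exp_im]
  have h1 : ((-(1/2) : ℂ) * x ^ 2 + (c * I) * x + 0).re = -(x^2)/2 := by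
    simp [← Complex.ofReal_pow]; ring
  have h2 : ((-(1/2) : ℂ) * x ^ 2 + (c * I) * x + 0).im = c * x := by
    simp [← Complex.ofReal_pow]
  rw [h1, h2]

lemma aux_cos_int (c : ℝ) :
    ∫ x : ℝ, Real.exp (-(x^2)/2) * Real.cos (c * x)
      = Real.sqrt (2 * Real.pi) * Real.exp (-(c^2)/2) := by
  have := integral_re (aux_integrable_cexp c)
  simp only [RCLike.re_to_complex] at this
  simp_rw [aux_re] at this
  rw [this, aux_cexp_int]
  rw [show (-(c : ℂ)^2/2) = ((-(c^2)/2 : ℝ) : ℂ) by push_cast; ring,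
    ← Complex.ofReal_exp, ← Complex.ofReal_mul, Complex.ofReal_re]

lemma aux_sin_int (c : ℝ) :
    ∫ x : ℝ, Real.exp (-(x^2)/2) * Real.sin (c * x) = 0 := by
  have := integral_im (aux_integrable_cexp c)
  simp only [RCLike.im_to_complex] at this
  simp_rw [aux_im] at this
  rw [this, aux_cexp_int]
  rw [show (-(c : ℂ)^2/2) = ((-(c^2)/2 : ℝ) : ℂ) by push_cast; ring,
    ← Complex.ofReal_exp, ← Complex.ofReal_mul, Complex.ofReal_im]

lemma integral_gaussianReal_eq (f : ℝ → ℝ) :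
    ∫ x, f x ∂(gaussianReal 0 1) = ∫ x : ℝ, gaussianPDFReal 0 1 x * f x := by
  rw [gaussianReal_of_var_ne_zero 0 one_ne_zero]
  have : (gaussianPDF 0 1) = (fun x => (((gaussianPDFReal 0 1 x).toNNReal) : ℝ≥0∞)) :=
    rfl
  rw [this, integral_withDensity_eq_integral_smul
    ((measurable_gaussianPDFReal 0 1).real_toNNReal) f]
  congr 1
  ext x
  rw [NNReal.smul_def, Real.coe_toNNReal _ (gaussianPDFReal_nonneg 0 1 x), smul_eq_mul]

lemma gaussianPDFReal_zero_one (x : ℝ) :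
    gaussianPDFReal 0 1 x = (Real.sqrt (2 * Real.pi))⁻¹ * Real.exp (-(x^2)/2) := by
  simp [gaussianPDFReal]

lemma gauss_cos (c : ℝ) :
    ∫ x, Real.cos (c * x) ∂(gaussianReal 0 1) = Real.exp (-(c^2)/2) := by
  rw [integral_gaussianReal_eq]
  simp_rw [gaussianPDFReal_zero_one, mul_assoc]
  rw [integral_const_mul, aux_cos_int, ← mul_assoc,
    inv_mul_cancel₀ (Real.sqrt_ne_zero'.mpr (by positivity)), one_mul]

lemma gauss_sin (c : ℝ) :
    ∫ x, Real.sin (c * x) ∂(gaussianReal 0 1) = 0 := by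
  rw [integral_gaussianReal_eq]
  simp_rw [gaussianPDFReal_zero_one, mul_assoc]
  rw [integral_const_mul, aux_sin_int, mul_zero]

end GaussAux

lemma cos_sin_sum {Ω : Type*} [MeasurableSpace Ω] (P : Measure Ω) [IsProbabilityMeasure P]
    (ξ : ℕ → Ω → ℝ) (hmξ : ∀ k, Measurable (ξ k))
    (hξindep : iIndepFun ξ P)
    (hξgauss : ∀ k, Measure.map (ξ k) P = gaussianReal 0 1)
    (c : ℕ → ℝ) (s : Finset ℕ) :
    (∫ ω, Real.cos (∑ k ∈ s, c k * ξ k ω) ∂P = Real.exp (-(∑ k ∈ s, (c k)^2)/2))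
    ∧ (∫ ω, Real.sin (∑ k ∈ s, c k * ξ k ω) ∂P = 0) := by
  classical
  induction s using Finset.induction_on with
  | empty => simp
  | @insert j s hj ih =>
    have hηm : ∀ k, Measurable (fun ω => c k * ξ k ω) := fun k => (hmξ k).const_mul _
    have hηindep : iIndepFun (fun k ω => c k * ξ k ω) P :=
      hξindep.comp (fun k x => c k * x) (fun k => measurable_const_mul (c k))
    have hInd : IndepFun (fun ω => ∑ k ∈ s, c k * ξ k ω) (fun ω => c j * ξ j ω) P := by
      have h := hηindep.indepFun_finset_sum_of_notMem hηm hj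
      rwa [show (∑ k ∈ s, fun ω => c k * ξ k ω) = fun ω => ∑ k ∈ s, c k * ξ k ω from by
        ext ω; simp] at h
    have hYc : Measurable fun ω => Real.cos (∑ k ∈ s, c k * ξ k ω) :=
      (Real.measurable_cos.comp (Finset.measurable_sum s fun k _ => hηm k))
    have hYs : Measurable fun ω => Real.sin (∑ k ∈ s, c k * ξ k ω) :=
      (Real.measurable_sin.comp (Finset.measurable_sum s fun k _ => hηm k))
    have hXc : Measurable fun ω => Real.cos (c j * ξ j ω) :=
      Real.measurable_cos.comp (hηm j)
    have hXs : Measurable fun ω => Real.sin (c j * ξ j ω) :=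
      Real.measurable_sin.comp (hηm j)
    have hcosj : ∫ ω, Real.cos (c j * ξ j ω) ∂P = Real.exp (-((c j)^2)/2) := by
      have : ∫ ω, Real.cos (c j * ξ j ω) ∂P = ∫ x, Real.cos (c j * x) ∂(Measure.map (ξ j) P) :=
        (integral_map (hmξ j).aemeasurable
          (Real.measurable_cos.comp (measurable_const_mul _)).aestronglyMeasurable).symm
      rw [this, hξgauss j, gauss_cos]
    have hsinj : ∫ ω, Real.sin (c j * ξ j ω) ∂P = 0 := by
      have : ∫ ω, Real.sin (c j * ξ j ω) ∂P = ∫ x, Real.sin (c j * x) ∂(Measure.map (ξ j) P) :=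
        (integral_map (hmξ j).aemeasurable
          (Real.measurable_sin.comp (measurable_const_mul _)).aestronglyMeasurable).symm
      rw [this, hξgauss j, gauss_sin]
    have hbdd : ∀ (f : Ω → ℝ), Measurable f → (∀ ω, |f ω| ≤ 1) → Integrable f P := by
      intro f hf hb
      exact (integrable_const (1:ℝ)).mono' hf.aestronglyMeasurable
        (ae_of_all _ fun ω => by simpa [Real.norm_eq_abs] using hb ω)
    have hICC : Integrable (fun ω => Real.cos (c j * ξ j ω)
        * Real.cos (∑ k ∈ s, c k * ξ k ω)) P :=
      hbdd _ (hXc.mul hYc) fun ω => by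
        rw [abs_mul]
        exact mul_le_one₀ (Real.abs_cos_le_one _) (abs_nonneg _) (Real.abs_cos_le_one _)
    have hISS : Integrable (fun ω => Real.sin (c j * ξ j ω)
        * Real.sin (∑ k ∈ s, c k * ξ k ω)) P :=
      hbdd _ (hXs.mul hYs) fun ω => by
        rw [abs_mul]
        exact mul_le_one₀ (Real.abs_sin_le_one _) (abs_nonneg _) (Real.abs_sin_le_one _)
    have hISC : Integrable (fun ω => Real.sin (c j * ξ j ω)
        * Real.cos (∑ k ∈ s, c k * ξ k ω)) P :=
      hbdd _ (hXs.mul hYc) fun ω => by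
        rw [abs_mul]
        exact mul_le_one₀ (Real.abs_sin_le_one _) (abs_nonneg _) (Real.abs_cos_le_one _)
    have hICS : Integrable (fun ω => Real.cos (c j * ξ j ω)
        * Real.sin (∑ k ∈ s, c k * ξ k ω)) P :=
      hbdd _ (hXc.mul hYs) fun ω => by
        rw [abs_mul]
        exact mul_le_one₀ (Real.abs_cos_le_one _) (abs_nonneg _) (Real.abs_sin_le_one _)
    have eCC := (hInd.symm.comp Real.measurable_cos Real.measurable_cos).integral_fun_mul_eq_mul_integral
      hXc.aestronglyMeasurable hYc.aestronglyMeasurable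
    have eSS := (hInd.symm.comp Real.measurable_sin Real.measurable_sin).integral_fun_mul_eq_mul_integral
      hXs.aestronglyMeasurable hYs.aestronglyMeasurable
    have eSC := (hInd.symm.comp Real.measurable_sin Real.measurable_cos).integral_fun_mul_eq_mul_integral
      hXs.aestronglyMeasurable hYc.aestronglyMeasurable
    have eCS := (hInd.symm.comp Real.measurable_cos Real.measurable_sin).integral_fun_mul_eq_mul_integral
      hXc.aestronglyMeasurable hYs.aestronglyMeasurable
    simp only [Function.comp_def] at eCC eSS eSC eCS
    constructor
    · calc ∫ ω, Real.cos (∑ k ∈ insert j s, c k * ξ k ω) ∂P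
          = ∫ ω, (Real.cos (c j * ξ j ω) * Real.cos (∑ k ∈ s, c k * ξ k ω)
            - Real.sin (c j * ξ j ω) * Real.sin (∑ k ∈ s, c k * ξ k ω)) ∂P := by
            congr 1; ext ω; rw [Finset.sum_insert hj, Real.cos_add]
      _ = ∫ ω, Real.cos (c j * ξ j ω) * Real.cos (∑ k ∈ s, c k * ξ k ω) ∂P
            - ∫ ω, Real.sin (c j * ξ j ω) * Real.sin (∑ k ∈ s, c k * ξ k ω) ∂P :=
            integral_sub hICC hISS
      _ = Real.exp (-((c j)^2)/2) * Real.exp (-(∑ k ∈ s, (c k)^2)/2) - 0 * 0 := by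
            rw [eCC, eSS, hcosj, hsinj, ih.1, ih.2]
      _ = Real.exp (-(∑ k ∈ insert j s, (c k)^2)/2) := by
            rw [← Real.exp_add, Finset.sum_insert hj]
            ring_nf
    · calc ∫ ω, Real.sin (∑ k ∈ insert j s, c k * ξ k ω) ∂P
          = ∫ ω, (Real.sin (c j * ξ j ω) * Real.cos (∑ k ∈ s, c k * ξ k ω)
            + Real.cos (c j * ξ j ω) * Real.sin (∑ k ∈ s, c k * ξ k ω)) ∂P := by
            congr 1; ext ω; rw [Finset.sum_insert hj, Real.sin_add]
      _ = ∫ ω, Real.sin (c j * ξ j ω) * Real.cos (∑ k ∈ s, c k * ξ k ω) ∂P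
            + ∫ ω, Real.cos (c j * ξ j ω) * Real.sin (∑ k ∈ s, c k * ξ k ω) ∂P :=
            integral_add hISC hICS
      _ = 0 := by rw [eSC, eCS, hsinj, ih.2]; ring

lemma key_identity {Ω : Type*} [MeasurableSpace Ω] (P : Measure Ω) [IsProbabilityMeasure P]
    (ξ : ℕ → Ω → ℝ) (W : ℕ → ℕ → Ω → ℝ)
    (hmξ : ∀ k, Measurable (ξ k)) (hmW : ∀ n k, Measurable (W n k))
    (hξindep : iIndepFun ξ P)
    (hξgauss : ∀ k, Measure.map (ξ k) P = gaussianReal 0 1)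
    (hindep : Indep
      (⨆ n, ⨆ k, MeasurableSpace.comap (W n k) inferInstance)
      (⨆ k, MeasurableSpace.comap (ξ k) inferInstance) P)
    (t : ℝ) (n : ℕ) :
    ∫ ω, Real.cos (t * ((1 / Real.sqrt n) * ∑ k ∈ Finset.Icc 1 n, W n k ω * ξ k ω)) ∂P
      = ∫ ω, Real.exp (-(t^2/2) * ((1/(n:ℝ)) * ∑ k ∈ Finset.Icc 1 n, (W n k ω)^2)) ∂P := by
  classical
  set s : Finset ℕ := Finset.Icc 1 n with hs
  set A : Ω → (ℕ → ℝ) := fun ω k => W n k ω with hA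
  set B : Ω → (ℕ → ℝ) := fun ω k => ξ k ω with hB
  have hAmes : Measurable A := measurable_pi_lambda _ fun k => hmW n k
  have hBmes : Measurable B := measurable_pi_lambda _ fun k => hmξ k
  have hAB : IndepFun A B P := by
    have hA0 : MeasurableSpace.comap A MeasurableSpace.pi
        = ⨆ k, MeasurableSpace.comap (W n k) inferInstance := by
      rw [MeasurableSpace.pi, MeasurableSpace.comap_iSup]
      exact iSup_congr fun k => MeasurableSpace.comap_comp
    have hB0 : MeasurableSpace.comap B MeasurableSpace.pi
        = ⨆ k, MeasurableSpace.comap (ξ k) inferInstance := by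
      rw [MeasurableSpace.pi, MeasurableSpace.comap_iSup]
      exact iSup_congr fun k => MeasurableSpace.comap_comp
    have hA' : MeasurableSpace.comap A MeasurableSpace.pi
        ≤ ⨆ m, ⨆ k, MeasurableSpace.comap (W m k) inferInstance := by
      rw [hA0]
      exact le_iSup (fun m => ⨆ k, MeasurableSpace.comap (W m k) inferInstance) n
    have hB' : MeasurableSpace.comap B MeasurableSpace.pi
        ≤ ⨆ k, MeasurableSpace.comap (ξ k) inferInstance := hB0.le
    exact indep_of_indep_of_le_left (indep_of_indep_of_le_right hindep hB') hA'
  have hprod : P.map (fun ω => (A ω, B ω)) = (P.map A).prod (P.map B) :=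
    (indepFun_iff_map_prod_eq_prod_map_map hAmes.aemeasurable hBmes.aemeasurable).mp hAB
  haveI : IsProbabilityMeasure (P.map A) := Measure.isProbabilityMeasure_map hAmes.aemeasurable
  haveI : IsProbabilityMeasure (P.map B) := Measure.isProbabilityMeasure_map hBmes.aemeasurable
  set F : (ℕ → ℝ) × (ℕ → ℝ) → ℝ :=
    fun p => Real.cos (t * ((1 / Real.sqrt n) * ∑ k ∈ s, p.1 k * p.2 k)) with hF
  have hFm : Measurable F := by
    apply Real.measurable_cos.comp
    apply Measurable.const_mul
    apply Measurable.const_mul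
    exact Finset.measurable_sum s fun k _ =>
      ((measurable_pi_apply k).comp measurable_fst).mul
        ((measurable_pi_apply k).comp measurable_snd)
  have hFint : Integrable F ((P.map A).prod (P.map B)) :=
    (integrable_const (1:ℝ)).mono' hFm.aestronglyMeasurable
      (ae_of_all _ fun p => by simpa [Real.norm_eq_abs] using Real.abs_cos_le_one _)
  have step1 : ∫ ω, Real.cos (t * ((1 / Real.sqrt n) * ∑ k ∈ s, W n k ω * ξ k ω)) ∂P
      = ∫ p, F p ∂((P.map A).prod (P.map B)) := by
    rw [← hprod, integral_map (hAmes.aemeasurable.prodMk hBmes.aemeasurable)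
      hFm.aestronglyMeasurable]
  have step2 : ∀ a : ℕ → ℝ, ∫ b, F (a, b) ∂(P.map B)
      = Real.exp (-(t^2/2) * ((1/(n:ℝ)) * ∑ k ∈ s, (a k)^2)) := by
    intro a
    have hmb : Measurable (fun b => F (a, b)) := hFm.comp (measurable_const.prodMk measurable_id)
    rw [integral_map hBmes.aemeasurable hmb.aestronglyMeasurable]
    have hrw : ∀ ω, F (a, B ω) = Real.cos (∑ k ∈ s, (t * (1 / Real.sqrt n) * a k) * ξ k ω) := by
      intro ω
      simp only [hF, hB]
      congr 1
      rw [Finset.mul_sum, Finset.mul_sum]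
      exact Finset.sum_congr rfl fun k _ => by ring
    simp_rw [hrw]
    rw [(cos_sin_sum P ξ hmξ hξindep hξgauss _ s).1]
    congr 1
    have hsq : (t * (1 / Real.sqrt n))^2 = t^2 * (1/(n:ℝ)) := by
      rw [mul_pow, div_pow, one_pow, Real.sq_sqrt (Nat.cast_nonneg n)]
    calc -(∑ k ∈ s, (t * (1 / Real.sqrt n) * a k)^2)/2
        = -((t * (1 / Real.sqrt n))^2 * ∑ k ∈ s, (a k)^2)/2 := by
          rw [Finset.mul_sum]; congr 2; exact Finset.sum_congr rfl fun k _ => by ring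
      _ = -(t^2/2) * ((1/(n:ℝ)) * ∑ k ∈ s, (a k)^2) := by rw [hsq]; ring
  have step3 : ∫ p, F p ∂((P.map A).prod (P.map B))
      = ∫ a, Real.exp (-(t^2/2) * ((1/(n:ℝ)) * ∑ k ∈ s, (a k)^2)) ∂(P.map A) := by
    rw [integral_prod F hFint]
    exact integral_congr_ae (ae_of_all _ step2)
  have hgm : Measurable (fun a : ℕ → ℝ =>
      Real.exp (-(t^2/2) * ((1/(n:ℝ)) * ∑ k ∈ s, (a k)^2))) := by
    apply Real.measurable_exp.comp
    apply Measurable.const_mul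
    apply Measurable.const_mul
    exact Finset.measurable_sum s fun k _ => (measurable_pi_apply k).pow_const 2
  have step4 : ∫ a, Real.exp (-(t^2/2) * ((1/(n:ℝ)) * ∑ k ∈ s, (a k)^2)) ∂(P.map A)
      = ∫ ω, Real.exp (-(t^2/2) * ((1/(n:ℝ)) * ∑ k ∈ s, (W n k ω)^2)) ∂P := by
    rw [integral_map hAmes.aemeasurable hgm.aestronglyMeasurable]
  rw [step1, step3, step4]

noncomputable def cosBCF (t : ℝ) : BoundedContinuousFunction ℝ ℝ :=
  ⟨⟨fun x => Real.cos (t * x), Real.continuous_cos.comp (continuous_const.mul continuous_id)⟩,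
   ⟨2, fun x y => by
      rw [Real.dist_eq]
      calc |Real.cos (t * x) - Real.cos (t * y)| ≤ |Real.cos (t * x)| + |Real.cos (t * y)| :=
            abs_sub _ _
        _ ≤ 1 + 1 := add_le_add (Real.abs_cos_le_one _) (Real.abs_cos_le_one _)
        _ = 2 := by norm_num⟩⟩


/-- Convergence in distribution (weak convergence of the laws). -/
def TendstoInDistribution {Ω : Type*} [MeasurableSpace Ω] (P : Measure Ω)
    (f : ℕ → Ω → ℝ) (μ : Measure ℝ) : Prop :=
  ∀ g : BoundedContinuousFunction ℝ ℝ,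
    Tendsto (fun n => ∫ ω, g (f n ω) ∂P) atTop (𝓝 (∫ x, g x ∂μ))

theorem stmt5
    {Ω : Type*} [MeasurableSpace Ω] (P : Measure Ω) [IsProbabilityMeasure P]
    (ξ : ℕ → Ω → ℝ) (W : ℕ → ℕ → Ω → ℝ)
    (hmξ : ∀ k, Measurable (ξ k)) (hmW : ∀ n k, Measurable (W n k))
    -- ξ i.i.d. standard normal
    (hξindep : iIndepFun ξ P)
    (hξgauss : ∀ k, Measure.map (ξ k) P = gaussianReal 0 1)
    -- the weights are independent of (ξ_k)
    (hindep : Indep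
      (⨆ n, ⨆ k, MeasurableSpace.comap (W n k) inferInstance)
      (⨆ k, MeasurableSpace.comap (ξ k) inferInstance) P)
    -- convergence in distribution of the normalized weighted sums
    (hconv : TendstoInDistribution P
      (fun n ω => (1 / Real.sqrt n) * ∑ k ∈ Finset.Icc 1 n, W n k ω * ξ k ω)
      (gaussianReal 0 1)) :
    TendstoInMeasure P
      (fun (n : ℕ) ω => (1 / (n : ℝ)) * ∑ k ∈ Finset.Icc 1 n, (W n k ω) ^ 2)
      atTop (fun _ => (1 : ℝ)) := by

  classical
  set V : ℕ → Ω → ℝ := fun n ω => (1/(n:ℝ)) * ∑ k ∈ Finset.Icc 1 n, (W n k ω)^2 with hV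
  have hVm : ∀ n, Measurable (V n) := fun n =>
    (Finset.measurable_sum _ fun k _ => (hmW n k).pow_const 2).const_mul _
  have hV0 : ∀ n ω, 0 ≤ V n ω := fun n ω =>
    mul_nonneg (by positivity) (Finset.sum_nonneg fun k _ => sq_nonneg _)
  have hmain : ∀ t : ℝ, Tendsto (fun n => ∫ ω, Real.exp (-(t^2/2) * V n ω) ∂P) atTop
      (𝓝 (Real.exp (-(t^2)/2))) := by
    intro t
    have h := hconv (cosBCF t)
    have hg : ∫ x, (cosBCF t) x ∂(gaussianReal 0 1) = Real.exp (-(t^2)/2) := by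
      simpa [cosBCF] using gauss_cos t
    rw [hg] at h
    refine h.congr fun n => ?_
    have hk := key_identity P ξ W hmξ hmW hξindep hξgauss hindep t n
    simpa [cosBCF, hV] using hk
  set c : ℝ := Real.exp (-(1/2)) with hc
  set X : ℕ → Ω → ℝ := fun n ω => Real.exp (-(1/2) * V n ω) with hX
  have hXm : ∀ n, Measurable (X n) := fun n => Real.measurable_exp.comp ((hVm n).const_mul _)
  have hX0 : ∀ n ω, 0 < X n ω := fun n ω => Real.exp_pos _
  have hX1 : ∀ n ω, X n ω ≤ 1 := fun n ω => Real.exp_le_one_iff.mpr (by nlinarith [hV0 n ω])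
  have h1 : Tendsto (fun n => ∫ ω, X n ω ∂P) atTop (𝓝 c) := by
    have h := hmain 1
    have e0 : Real.exp (-((1:ℝ)^2)/2) = c := by norm_num [hc]
    rw [e0] at h
    refine h.congr fun n => ?_
    congr 1
    ext ω
    simp only [hX, one_pow]
  have h2 : Tendsto (fun n => ∫ ω, (X n ω)^2 ∂P) atTop (𝓝 (c^2)) := by
    have h := hmain (Real.sqrt 2)
    have hs2 : Real.sqrt 2 ^ 2 = 2 := Real.sq_sqrt (by norm_num)
    have e0 : Real.exp (-(Real.sqrt 2^2)/2) = c^2 := by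
      rw [hs2, hc, sq, ← Real.exp_add]; norm_num
    rw [e0] at h
    refine h.congr fun n => ?_
    congr 1
    ext ω
    rw [hs2]
    simp only [hX]
    rw [sq, ← Real.exp_add]
    congr 1
    ring
  have hIX : ∀ n, Integrable (X n) P := fun n =>
    (integrable_const (1:ℝ)).mono' (hXm n).aestronglyMeasurable
      (ae_of_all _ fun ω => by
        rw [Real.norm_eq_abs, abs_of_pos (hX0 n ω)]; exact hX1 n ω)
  have hIX2 : ∀ n, Integrable (fun ω => (X n ω)^2) P := fun n =>
    (integrable_const (1:ℝ)).mono' ((hXm n).pow_const 2).aestronglyMeasurable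
      (ae_of_all _ fun ω => by
        rw [Real.norm_eq_abs, abs_of_pos (pow_pos (hX0 n ω) 2)]
        nlinarith [hX0 n ω, hX1 n ω])
  have hL2 : Tendsto (fun n => ∫ ω, (X n ω - c)^2 ∂P) atTop (𝓝 0) := by
    have heq : ∀ n, ∫ ω, (X n ω - c)^2 ∂P
        = ((∫ ω, (X n ω)^2 ∂P) - 2*c*(∫ ω, X n ω ∂P)) + c^2 := by
      intro n
      have e1 : ∀ ω, (X n ω - c)^2 = ((X n ω)^2 - 2*c*(X n ω)) + c^2 := fun ω => by ring
      have hfint : Integrable (fun ω => X n ω^2 - 2*c*X n ω) P :=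
        (hIX2 n).sub ((hIX n).const_mul (2*c))
      rw [integral_congr_ae (ae_of_all _ e1)]
      rw [integral_add hfint (integrable_const _),
        integral_sub (hIX2 n) ((hIX n).const_mul (2*c)), integral_const, integral_const_mul]
      simp [measure_univ]
    have hlim : Tendsto (fun n => ((∫ ω, (X n ω)^2 ∂P) - 2*c*(∫ ω, X n ω ∂P)) + c^2) atTop
        (𝓝 ((c^2 - 2*c*c) + c^2)) :=
      (h2.sub (h1.const_mul (2*c))).add tendsto_const_nhds
    have : (c^2 - 2*c*c) + c^2 = 0 := by ring
    rw [this] at hlim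
    exact (hlim.congr fun n => (heq n).symm)
  -- final step
  rw [tendstoInMeasure_iff_dist]
  intro ε hε
  set δ : ℝ := min (Real.exp (-(1-ε)/2) - c) (c - Real.exp (-(1+ε)/2)) with hδ
  have hδpos : 0 < δ := by
    apply lt_min
    · rw [sub_pos, hc]
      exact Real.exp_lt_exp.mpr (by linarith)
    · rw [sub_pos, hc]
      exact Real.exp_lt_exp.mpr (by linarith)
  have hclaim : ∀ n ω, ε ≤ dist (V n ω) 1 → δ^2 ≤ (X n ω - c)^2 := by
    intro n ω h
    rw [Real.dist_eq] at h
    have hcase := le_abs.mp h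
    have hkey : δ ≤ |X n ω - c| := by
      rcases hcase with h' | h'
      · -- V ≥ 1 + ε, X ≤ exp(-(1+ε)/2) ≤ c
        have hXle : X n ω ≤ Real.exp (-(1+ε)/2) := by
          rw [hX]
          exact Real.exp_le_exp.mpr (by nlinarith)
        have : X n ω ≤ c := le_trans hXle (by rw [hc]; exact Real.exp_le_exp.mpr (by linarith))
        rw [abs_of_nonpos (by linarith)]
        calc δ ≤ c - Real.exp (-(1+ε)/2) := min_le_right _ _
          _ ≤ -(X n ω - c) := by linarith
      · -- V ≤ 1 - ε, X ≥ exp(-(1-ε)/2) ≥ c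
        have hXge : Real.exp (-(1-ε)/2) ≤ X n ω := by
          rw [hX]
          exact Real.exp_le_exp.mpr (by nlinarith)
        have : c ≤ X n ω := le_trans (by rw [hc]; exact Real.exp_le_exp.mpr (by linarith)) hXge
        rw [abs_of_nonneg (by linarith)]
        calc δ ≤ Real.exp (-(1-ε)/2) - c := min_le_left _ _
          _ ≤ X n ω - c := by linarith
    calc δ^2 ≤ |X n ω - c|^2 := pow_le_pow_left₀ hδpos.le hkey 2
      _ = (X n ω - c)^2 := sq_abs _
  have hbound : ∀ n, P {ω | ε ≤ dist (V n ω) 1}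
      ≤ ENNReal.ofReal (∫ ω, (X n ω - c)^2 ∂P) / ENNReal.ofReal (δ^2) := by
    intro n
    have hsub : {ω | ε ≤ dist (V n ω) 1}
        ⊆ {ω | ENNReal.ofReal (δ^2) ≤ ENNReal.ofReal ((X n ω - c)^2)} := fun ω hω =>
      ENNReal.ofReal_le_ofReal (hclaim n ω hω)
    have hmark := mul_meas_ge_le_lintegral₀ (μ := P)
      (f := fun ω => ENNReal.ofReal ((X n ω - c)^2))
      (((hXm n).sub measurable_const).pow_const 2).ennreal_ofReal.aemeasurable
      (ENNReal.ofReal (δ^2))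
    have hc0 : (0:ℝ) < c := Real.exp_pos _
    have hc1 : c ≤ 1 := Real.exp_le_one_iff.mpr (by norm_num)
    have hI3 : Integrable (fun ω => (X n ω - c)^2) P :=
      (integrable_const (4:ℝ)).mono'
        (((hXm n).sub measurable_const).pow_const 2).aestronglyMeasurable
        (ae_of_all _ fun ω => by
          rw [Real.norm_eq_abs, abs_of_nonneg (sq_nonneg _)]
          nlinarith [hX0 n ω, hX1 n ω])
    have hlint : ∫⁻ ω, ENNReal.ofReal ((X n ω - c)^2) ∂P
        = ENNReal.ofReal (∫ ω, (X n ω - c)^2 ∂P) := by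
      rw [← ofReal_integral_eq_lintegral_ofReal hI3 (ae_of_all _ fun ω => sq_nonneg _)]
    rw [ENNReal.le_div_iff_mul_le (Or.inl (by simp [ENNReal.ofReal_eq_zero]; positivity))
      (Or.inl ENNReal.ofReal_ne_top), mul_comm]
    calc ENNReal.ofReal (δ^2) * P {ω | ε ≤ dist (V n ω) 1}
        ≤ ENNReal.ofReal (δ^2) * P {ω | ENNReal.ofReal (δ^2)
            ≤ ENNReal.ofReal ((X n ω - c)^2)} := by
          exact mul_le_mul_right (measure_mono hsub) _
      _ ≤ ∫⁻ ω, ENNReal.ofReal ((X n ω - c)^2) ∂P := hmark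
      _ = ENNReal.ofReal (∫ ω, (X n ω - c)^2 ∂P) := hlint
  have hblim : Tendsto (fun n => ENNReal.ofReal (∫ ω, (X n ω - c)^2 ∂P) / ENNReal.ofReal (δ^2))
      atTop (𝓝 0) := by
    have h0 : Tendsto (fun n => ENNReal.ofReal (∫ ω, (X n ω - c)^2 ∂P)) atTop (𝓝 0) := by
      have := ENNReal.tendsto_ofReal hL2
      simpa using this
    have := ENNReal.Tendsto.mul_const (b := (ENNReal.ofReal (δ^2))⁻¹) h0
      (Or.inr (ENNReal.inv_ne_top.mpr (by simp [ENNReal.ofReal_eq_zero]; positivity)))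
    simpa [div_eq_mul_inv, zero_mul] using this
  exact tendsto_of_tendsto_of_tendsto_of_le_of_le tendsto_const_nhds hblim
    (fun n => zero_le') (fun n => hbound n)
end

section
/- For every r ∈ [0,1] and every n ≥ 1, E((T_n^0)^2) = Σ_{k=1}^n Π_{j=k}^{n−1} ((j + 4r − 2)/j), where the empty product (k = n) equals 1. In particular, E((T_{n+1}^0)^2) = ((n + 4r − 2)/n)·E((T_n^0)^2) + 1 for all n ≥ 1. -/
open MeasureTheory ProbabilityTheory Filter Finset Topology ENNReal
open scoped Classical


noncomputable def erwY {Ω : Type*} (U : ℕ → Ω → ℕ) (η : ℕ → Ω → Bool) : ℕ → Ω → ℝ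
  | n => fun ω =>
    if 2 ≤ n then
      (if η n ω then 1 else -1) *
      (if h : 1 ≤ U n ω ∧ U n ω < n then erwY U η (U n ω) ω else 1)
    else 1
  decreasing_by exact h.2

lemma erwY_def {Ω : Type*} (U : ℕ → Ω → ℕ) (η : ℕ → Ω → Bool) (n : ℕ) (ω : Ω) :
    erwY U η n ω =
    if 2 ≤ n then
      (if η n ω then 1 else -1) *
      (if _h : 1 ≤ U n ω ∧ U n ω < n then erwY U η (U n ω) ω else 1)
    else 1 := by
  rw [erwY]

lemma erwY_pm {Ω : Type*} (U : ℕ → Ω → ℕ) (η : ℕ → Ω → Bool) (n : ℕ) (ω : Ω) :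
    erwY U η n ω = 1 ∨ erwY U η n ω = -1 := by
  induction n using Nat.strong_induction_on with
  | _ n ih =>
    rw [erwY_def]
    by_cases h2 : 2 ≤ n
    · by_cases hu : 1 ≤ U n ω ∧ U n ω < n
      · rcases ih _ hu.2 with h | h <;> by_cases he : η n ω = true <;>
          simp [h2, hu, h, he]
      · by_cases he : η n ω = true <;> simp [h2, hu, he]
    · simp [h2]

lemma erwY_sq {Ω : Type*} (U : ℕ → Ω → ℕ) (η : ℕ → Ω → Bool) (n : ℕ) (ω : Ω) :
    erwY U η n ω ^ 2 = 1 := by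
  rcases erwY_pm U η n ω with h | h <;> simp [h]

lemma erwY_abs {Ω : Type*} (U : ℕ → Ω → ℕ) (η : ℕ → Ω → Bool) (n : ℕ) (ω : Ω) :
    |erwY U η n ω| ≤ 1 := by
  rcases erwY_pm U η n ω with h | h <;> simp [h]

lemma erwY_measurable {Ω : Type*} (U : ℕ → Ω → ℕ) (η : ℕ → Ω → Bool)
    (F : ℕ → MeasurableSpace Ω)
    (hFmono : Monotone F)
    (hUF : ∀ m, 2 ≤ m → Measurable[F m] (U m))
    (hηF : ∀ m, 2 ≤ m → Measurable[F m] (η m)) (n : ℕ) :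
    Measurable[F n] (erwY U η n) := by
  induction n using Nat.strong_induction_on with
  | _ n ih =>
    have hfun : erwY U η n = fun ω =>
        if 2 ≤ n then
          (if η n ω then 1 else -1) *
          (if _h : 1 ≤ U n ω ∧ U n ω < n then erwY U η (U n ω) ω else 1)
        else 1 := by
      funext ω; exact erwY_def U η n ω
    rw [hfun]
    by_cases h2 : 2 ≤ n
    · simp only [if_pos h2]
      apply Measurable.mul
      · exact (measurable_from_top (f := fun b : Bool => if b then (1:ℝ) else -1)).comp
          (hηF n h2)
      · have key : (fun ω => if _h : 1 ≤ U n ω ∧ U n ω < n then erwY U η (U n ω) ω else 1)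
            = (fun p : Ω × ℕ => if 1 ≤ p.2 ∧ p.2 < n then erwY U η p.2 p.1 else 1) ∘
              (fun ω => (ω, U n ω)) := by
          funext ω; simp
        rw [key]
        apply Measurable.comp
        · apply measurable_from_prod_countable_left
          intro k
          by_cases hk : 1 ≤ k ∧ k < n
          · simpa [hk] using (ih k hk.2).mono (hFmono hk.2.le) le_rfl
          · simpa [hk] using (measurable_const : Measurable[F n] fun _ : Ω => (1:ℝ))
        · exact measurable_id.prodMk (hUF n h2)
    · simp only [if_neg h2]; exact measurable_const
lemma erw_iIndep {Ω : Type*} [MeasurableSpace Ω] (P : Measure Ω) [IsProbabilityMeasure P]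
    (U : ℕ → Ω → ℕ) (η : ℕ → Ω → Bool)
    (hmU : ∀ n, Measurable (U n)) (hmη : ∀ n, Measurable (η n))
    (hUindep : iIndepFun U P)
    (hηindep : iIndepFun η P)
    (hmut : Indep
      (⨆ n, MeasurableSpace.comap (U n) inferInstance)
      (⨆ n, MeasurableSpace.comap (η n) inferInstance) P) :
    iIndep (fun p : ℕ × Bool =>
      if p.2 then MeasurableSpace.comap (η p.1) inferInstance
      else MeasurableSpace.comap (U p.1) inferInstance) P := by
  set H : ℕ × Bool → MeasurableSpace Ω := fun p =>
    if p.2 then MeasurableSpace.comap (η p.1) inferInstance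
    else MeasurableSpace.comap (U p.1) inferInstance with hH
  have hle : ∀ p, H p ≤ ‹MeasurableSpace Ω› := by
    rintro ⟨n, b⟩
    cases b
    · simpa [hH] using (hmU n).comap_le
    · simpa [hH] using (hmη n).comap_le
  refine iIndepSets.iIndep hle (fun p => {s | MeasurableSet[H p] s})
    (fun p => @MeasurableSpace.isPiSystem_measurableSet Ω (H p))
    (fun p => (@MeasurableSpace.generateFrom_measurableSet Ω (H p)).symm) ?_
  rw [iIndepSets_iff]
  intro S f hf
  -- split S into U-part and η-part
  set Sf := S.filter (fun p => p.2 = false) with hSf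
  set St := S.filter (fun p => p.2 = true) with hSt
  have hS : Sf ∪ St = S := by
    rw [hSf, hSt]
    simpa using Finset.filter_union_filter_not_eq (fun p : ℕ × Bool => p.2 = false) S
  have hinter : (⋂ p ∈ S, f p) = (⋂ p ∈ Sf, f p) ∩ (⋂ p ∈ St, f p) := by
    rw [← hS]
    ext x
    simp only [Set.mem_iInter, Set.mem_inter_iff, Finset.mem_union]
    constructor
    · intro h; exact ⟨fun p hp => h p (Or.inl hp), fun p hp => h p (Or.inr hp)⟩
    · rintro ⟨h1, h2⟩ p (hp | hp)
      exacts [h1 p hp, h2 p hp]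
  -- identify U-part as intersection over image
  have hSfmem : ∀ p ∈ Sf, p = (p.1, false) := by
    intro p hp
    have := (Finset.mem_filter.mp hp).2
    exact Prod.ext rfl this
  have hStmem : ∀ p ∈ St, p = (p.1, true) := by
    intro p hp
    have := (Finset.mem_filter.mp hp).2
    exact Prod.ext rfl this
  have hinjf : Set.InjOn Prod.fst (↑Sf : Set (ℕ × Bool)) := by
    intro p hp q hq h
    rw [hSfmem p hp, hSfmem q hq, h]
  have hinjt : Set.InjOn Prod.fst (↑St : Set (ℕ × Bool)) := by
    intro p hp q hq h
    rw [hStmem p hp, hStmem q hq, h]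
  have hiterf : (⋂ p ∈ Sf, f p) = ⋂ n ∈ Sf.image Prod.fst, f (n, false) := by
    ext x
    simp only [Set.mem_iInter, Finset.mem_image]
    constructor
    · rintro h n ⟨p, hp, rfl⟩
      rw [← hSfmem p hp]; exact h p hp
    · intro h p hp
      rw [hSfmem p hp]; exact h p.1 ⟨p, hp, rfl⟩
  have hitert : (⋂ p ∈ St, f p) = ⋂ n ∈ St.image Prod.fst, f (n, true) := by
    ext x
    simp only [Set.mem_iInter, Finset.mem_image]
    constructor
    · rintro h n ⟨p, hp, rfl⟩
      rw [← hStmem p hp]; exact h p hp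
    · intro h p hp
      rw [hStmem p hp]; exact h p.1 ⟨p, hp, rfl⟩
  have hmf : ∀ n ∈ Sf.image Prod.fst,
      MeasurableSet[MeasurableSpace.comap (U n) inferInstance] (f (n, false)) := by
    rintro n hn
    obtain ⟨p, hp, rfl⟩ := Finset.mem_image.mp hn
    have := hf p (Finset.mem_filter.mp hp).1
    rw [hSfmem p hp] at this
    simpa [hH] using this
  have hmt : ∀ n ∈ St.image Prod.fst,
      MeasurableSet[MeasurableSpace.comap (η n) inferInstance] (f (n, true)) := by
    rintro n hn
    obtain ⟨p, hp, rfl⟩ := Finset.mem_image.mp hn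
    have := hf p (Finset.mem_filter.mp hp).1
    rw [hStmem p hp] at this
    simpa [hH] using this
  -- the two blocks
  have hA : MeasurableSet[⨆ n, MeasurableSpace.comap (U n) inferInstance] (⋂ p ∈ Sf, f p) := by
    rw [hiterf]
    refine MeasurableSet.biInter (Finset.countable_toSet _) (fun n hn => ?_)
    exact (le_iSup (fun n => MeasurableSpace.comap (U n) inferInstance) n) _ (hmf n hn)
  have hB : MeasurableSet[⨆ n, MeasurableSpace.comap (η n) inferInstance] (⋂ p ∈ St, f p) := by
    rw [hitert]
    refine MeasurableSet.biInter (Finset.countable_toSet _) (fun n hn => ?_)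
    exact (le_iSup (fun n => MeasurableSpace.comap (η n) inferInstance) n) _ (hmt n hn)
  have hmul := (Indep_iff _ _ _).mp hmut _ _ hA hB
  have hPf : P (⋂ p ∈ Sf, f p) = ∏ p ∈ Sf, P (f p) := by
    rw [hiterf, hUindep.meas_biInter hmf,
      Finset.prod_image (fun p hp q hq h => hinjf hp hq h)]
    exact Finset.prod_congr rfl (fun p hp => by rw [← hSfmem p hp])
  have hPt : P (⋂ p ∈ St, f p) = ∏ p ∈ St, P (f p) := by
    rw [hitert, hηindep.meas_biInter hmt,
      Finset.prod_image (fun p hp q hq h => hinjt hp hq h)]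
    exact Finset.prod_congr rfl (fun p hp => by rw [← hStmem p hp])
  rw [hinter, hmul, hPf, hPt, ← hS,
    Finset.prod_union (Finset.disjoint_left.mpr (by
      intro p hp hp'
      rw [hSf] at hp; rw [hSt] at hp'
      simp only [Finset.mem_filter] at hp hp'
      rw [hp.2] at hp'
      exact Bool.false_ne_true hp'.2))]


theorem stmt13
    {Ω : Type*} [MeasurableSpace Ω] (P : Measure Ω) [IsProbabilityMeasure P]
    (r : ℝ) (hr : 0 ≤ r) (hr1 : r ≤ 1)
    (U : ℕ → Ω → ℕ) (η : ℕ → Ω → Bool)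
    (hmU : ∀ n, Measurable (U n)) (hmη : ∀ n, Measurable (η n))
    -- U_n independent, uniform on {1,…,n−1}
    (hUindep : iIndepFun U P)
    (hUunif : ∀ n, 2 ≤ n → ∀ k ∈ Finset.Icc 1 (n-1),
      P {ω | U n ω = k} = (((n - 1 : ℕ) : ENNReal))⁻¹)
    -- η i.i.d. Bernoulli(r)
    (hηindep : iIndepFun η P)
    (hηber : ∀ n, 2 ≤ n → P {ω | η n ω = true} = ENNReal.ofReal r)
    -- (U_n) and (η_n) independent of each other
    (hmut : Indep
      (⨆ n, MeasurableSpace.comap (U n) inferInstance)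
      (⨆ n, MeasurableSpace.comap (η n) inferInstance) P)
    -- the elephant random walk with memory parameter r
    (X0 : ℕ → Ω → ℝ) (T0 : ℕ → Ω → ℝ)
    (hX01 : ∀ ω, X0 1 ω = 1)
    (hX0rec : ∀ n, 2 ≤ n → ∀ ω, X0 n ω =
      if η n ω then X0 (U n ω) ω else -X0 (U n ω) ω)
    (hT0 : ∀ n ω, T0 n ω = ∑ k ∈ Finset.Icc 1 n, X0 k ω)
    :
    (∀ n : ℕ, 1 ≤ n →
      ∫ ω, (T0 n ω) ^ 2 ∂P
        = ∑ k ∈ Finset.Icc 1 n, ∏ j ∈ Finset.Icc k (n-1), (((j : ℝ) + 4*r - 2) / j)) ∧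
    (∀ n : ℕ, 1 ≤ n →
      ∫ ω, (T0 (n+1) ω) ^ 2 ∂P
        = (((n : ℝ) + 4*r - 2) / n) * ∫ ω, (T0 n ω) ^ 2 ∂P + 1) := by
  -- notation
  set Y : ℕ → Ω → ℝ := erwY U η with hY
  set SY : ℕ → Ω → ℝ := fun n ω => ∑ k ∈ Finset.Icc 1 n, Y k ω with hSY
  set mUc : ℕ → MeasurableSpace Ω := fun n => MeasurableSpace.comap (U n) inferInstance with hmUc
  set mηc : ℕ → MeasurableSpace Ω := fun n => MeasurableSpace.comap (η n) inferInstance with hmηc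
  set F : ℕ → MeasurableSpace Ω := fun n => ⨆ m ∈ Set.Iic n, (mUc m ⊔ mηc m) with hF
  -- basic measurability
  have hUcle : ∀ n, mUc n ≤ ‹MeasurableSpace Ω› := fun n => (hmU n).comap_le
  have hηcle : ∀ n, mηc n ≤ ‹MeasurableSpace Ω› := fun n => (hmη n).comap_le
  have hFle : ∀ n, F n ≤ ‹MeasurableSpace Ω› := by
    intro n
    refine iSup₂_le fun m _ => sup_le (hUcle m) (hηcle m)
  have hFmono : Monotone F := by
    intro a b hab
    exact iSup₂_le fun m hm => le_iSup₂_of_le m (le_trans hm hab) le_rfl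
  have hUcleF : ∀ m, mUc m ≤ F m := fun m =>
    le_trans le_sup_left (le_iSup₂_of_le m (Set.mem_Iic.mpr le_rfl) le_rfl)
  have hηcleF : ∀ m, mηc m ≤ F m := fun m =>
    le_trans le_sup_right (le_iSup₂_of_le m (Set.mem_Iic.mpr le_rfl) le_rfl)
  have hUFm : ∀ m, Measurable[F m] (U m) := fun m =>
    Measurable.mono (Measurable.of_comap_le le_rfl) (hUcleF m) le_rfl
  have hηFm : ∀ m, Measurable[F m] (η m) := fun m =>
    Measurable.mono (Measurable.of_comap_le le_rfl) (hηcleF m) le_rfl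
  have hYF : ∀ n, Measurable[F n] (Y n) :=
    erwY_measurable U η F hFmono (fun m _ => hUFm m) (fun m _ => hηFm m)
  have hYM : ∀ n, Measurable (Y n) := fun n => (hYF n).mono (hFle n) le_rfl
  have hSYF : ∀ n, Measurable[F n] (SY n) := by
    intro n
    apply Finset.measurable_sum
    intro k hk
    exact (hYF k).mono (hFmono (Finset.mem_Icc.mp hk).2) le_rfl
  have hSYM : ∀ n, Measurable (SY n) := fun n => (hSYF n).mono (hFle n) le_rfl
  -- bounds and integrability
  have hSb : ∀ n ω, |SY n ω| ≤ n := by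
    intro n ω
    calc |SY n ω| ≤ ∑ k ∈ Finset.Icc 1 n, |Y k ω| := Finset.abs_sum_le_sum_abs _ _
      _ ≤ ∑ k ∈ Finset.Icc 1 n, 1 := Finset.sum_le_sum (fun k _ => erwY_abs U η k ω)
      _ ≤ n := by simp [Nat.card_Icc]
  have hint : ∀ (f : Ω → ℝ) (C : ℝ), Measurable f → (∀ ω, |f ω| ≤ C) → Integrable f P := by
    intro f C hf hb
    refine (integrable_const C).mono' hf.aestronglyMeasurable
      (Filter.Eventually.of_forall (fun ω => ?_))
    simpa [Real.norm_eq_abs] using hb ω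
  -- combined independence
  have hH : iIndep (fun p : ℕ × Bool =>
      if p.2 then MeasurableSpace.comap (η p.1) inferInstance
      else MeasurableSpace.comap (U p.1) inferInstance) P :=
    erw_iIndep P U η hmU hmη hUindep hηindep hmut
  -- independence of (U_{n+1}, η_{n+1}) from the past F n
  have hIndep : ∀ n : ℕ, Indep (mUc (n+1) ⊔ mηc (n+1)) (F n) P := by
    intro n
    set H : ℕ × Bool → MeasurableSpace Ω := fun p =>
      if p.2 then MeasurableSpace.comap (η p.1) inferInstance
      else MeasurableSpace.comap (U p.1) inferInstance with hHdef
    have hHle : ∀ p, H p ≤ ‹MeasurableSpace Ω› := by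
      rintro ⟨m, b⟩
      cases b
      · simpa [hHdef] using hUcle m
      · simpa [hHdef] using hηcle m
    have base := indep_biSup_compl hHle hH {p : ℕ × Bool | p.1 = n + 1}
    refine indep_of_indep_of_le_right (indep_of_indep_of_le_left base ?_) ?_
    · refine sup_le ?_ ?_
      · have : mUc (n+1) = H (n+1, false) := by simp [hHdef, hmUc]
        rw [this]
        exact le_biSup H (by simp)
      · have : mηc (n+1) = H (n+1, true) := by simp [hHdef, hmηc]
        rw [this]
        exact le_biSup H (by simp)
    · refine iSup₂_le fun m hm => sup_le ?_ ?_
      · have h1 : mUc m = H (m, false) := by simp [hHdef, hmUc]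
        rw [h1]
        refine le_biSup H ?_
        simp only [Set.mem_compl_iff, Set.mem_setOf_eq]
        have := Set.mem_Iic.mp hm
        omega
      · have h1 : mηc m = H (m, true) := by simp [hHdef, hmηc]
        rw [h1]
        refine le_biSup H ?_
        simp only [Set.mem_compl_iff, Set.mem_setOf_eq]
        have := Set.mem_Iic.mp hm
        omega
  have hUηind : ∀ n : ℕ, Indep (mUc n) (mηc n) P := fun n =>
    indep_of_indep_of_le_right (indep_of_indep_of_le_left hmut (le_iSup _ n)) (le_iSup _ n)
  -- a.e. goodness of U
  have hae : ∀ᵐ ω ∂P, ∀ m, 2 ≤ m → (1 ≤ U m ω ∧ U m ω ≤ m - 1) := by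
    rw [MeasureTheory.ae_all_iff]
    intro m
    by_cases hm : 2 ≤ m
    · have hms : MeasurableSet {ω | 1 ≤ U m ω ∧ U m ω ≤ m - 1} := by
        have : {ω | 1 ≤ U m ω ∧ U m ω ≤ m - 1} = U m ⁻¹' {k | 1 ≤ k ∧ k ≤ m - 1} := rfl
        rw [this]
        exact hmU m ((Set.to_countable _).measurableSet)
      have hdisj : (↑(Finset.Icc 1 (m-1)) : Set ℕ).PairwiseDisjoint
          (fun k => {ω | U m ω = k}) := by
        intro a _ b _ hab
        refine Set.disjoint_left.mpr ?_
        intro ω h1 h2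
        exact hab (h1.symm.trans h2)
      have hunion : {ω | 1 ≤ U m ω ∧ U m ω ≤ m - 1}
          = ⋃ k ∈ Finset.Icc 1 (m-1), {ω | U m ω = k} := by
        ext ω
        simp [Finset.mem_Icc]
      have h1 : P {ω | 1 ≤ U m ω ∧ U m ω ≤ m - 1} = 1 := by
        rw [hunion, measure_biUnion_finset hdisj (fun k _ => hmU m (measurableSet_singleton k))]
        rw [Finset.sum_congr rfl (fun k hk => hUunif m hm k hk)]
        rw [Finset.sum_const, Nat.card_Icc]
        simp only [Nat.add_sub_cancel, nsmul_eq_mul]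
        rw [ENNReal.mul_inv_cancel]
        · simp only [ne_eq, Nat.cast_eq_zero]
          omega
        · exact ENNReal.natCast_ne_top _
      have : P {ω | 1 ≤ U m ω ∧ U m ω ≤ m - 1}ᶜ = 0 := by
        rw [measure_compl hms (measure_ne_top _ _), h1, measure_univ, tsub_self]
      filter_upwards [MeasureTheory.measure_eq_zero_iff_ae_notMem.mp this] with ω hω
      intro _
      simpa using hω
    · filter_upwards with ω h
      exact absurd h hm
  -- a.e. identification of X0 with Y
  have hXY : ∀ᵐ ω ∂P, ∀ n, 1 ≤ n → X0 n ω = Y n ω := by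
    filter_upwards [hae] with ω hω
    intro n hn
    induction n using Nat.strong_induction_on with
    | _ n ih =>
      by_cases h2 : 2 ≤ n
      · obtain ⟨hu1, hu2⟩ := hω n h2
        have hult : U n ω < n := by omega
        have hIH : X0 (U n ω) ω = Y (U n ω) ω := ih (U n ω) hult hu1
        rw [hX0rec n h2 ω, hY, erwY_def, if_pos h2, dif_pos ⟨hu1, hult⟩]
        by_cases he : η n ω <;> simp [he, hIH, ← hY]
      · have hn1 : n = 1 := by omega
        subst hn1
        rw [hX01 ω, hY, erwY_def]
        norm_num
  have hT : ∀ n, ∫ ω, (T0 n ω) ^ 2 ∂P = ∫ ω, (SY n ω) ^ 2 ∂P := by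
    intro n
    refine integral_congr_ae ?_
    filter_upwards [hXY] with ω hω
    rw [hT0]
    congr 1
    exact Finset.sum_congr rfl (fun k hk => hω k (Finset.mem_Icc.mp hk).1)
  -- base case
  have hbase : ∫ ω, (SY 1 ω) ^ 2 ∂P = 1 := by
    have : ∀ ω, SY 1 ω = 1 := by
      intro ω
      simp only [hSY, Finset.Icc_self, Finset.sum_singleton]
      rw [hY, erwY_def]
      norm_num
    simp [this]
  -- the key recursion
  have hrec : ∀ n : ℕ, 1 ≤ n →
      ∫ ω, (SY (n+1) ω) ^ 2 ∂P = (((n : ℝ) + 4*r - 2) / n) * ∫ ω, (SY n ω) ^ 2 ∂P + 1 := by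
    intro n hn
    have hnR : (n : ℝ) ≠ 0 := Nat.cast_ne_zero.mpr (by omega)
    set e : Ω → ℝ := fun ω => if η (n+1) ω then 1 else -1 with he
    set Z : ℕ → Ω → ℝ := fun k ω => if U (n+1) ω = k then e ω else 0 with hZ
    -- measurability of Z k w.r.t. the pair σ-algebra
    have hUset : ∀ k, MeasurableSet[mUc (n+1)] {ω | U (n+1) ω = k} := by
      intro k
      refine ⟨{k}, measurableSet_singleton k, ?_⟩
      ext ω; simp
    have hηset : MeasurableSet[mηc (n+1)] {ω | η (n+1) ω = true} := by
      refine ⟨{true}, (Set.to_countable _).measurableSet, ?_⟩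
      ext ω; simp
    have hZm : ∀ k, Measurable[mUc (n+1) ⊔ mηc (n+1)] (Z k) := by
      intro k
      refine Measurable.ite ((le_sup_left : mUc (n+1) ≤ _) _ (hUset k)) ?_ measurable_const
      exact (measurable_from_top (f := fun b : Bool => if b then (1:ℝ) else -1)).comp
        (Measurable.of_comap_le (le_sup_right : mηc (n+1) ≤ _))
    have hZM : ∀ k, Measurable (Z k) := fun k =>
      (hZm k).mono (sup_le (hUcle (n+1)) (hηcle (n+1))) le_rfl
    have hZb : ∀ k ω, |Z k ω| ≤ 1 := by
      intro k ω
      rw [hZ, he]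
      dsimp only
      split_ifs <;> norm_num
    -- the value of ∫ Z k
    have hZint : ∀ k ∈ Finset.Icc 1 n, ∫ ω, Z k ω ∂P = (2*r - 1) / n := by
      intro k hk
      set A : Set Ω := {ω | U (n+1) ω = k} ∩ {ω | η (n+1) ω = true} with hA
      set B : Set Ω := {ω | U (n+1) ω = k} ∩ {ω | η (n+1) ω = false} with hB
      have hAm : MeasurableSet A :=
        ((hmU (n+1)) (measurableSet_singleton k)).inter
          ((hmη (n+1)) (measurableSet_singleton true))
      have hBm : MeasurableSet B :=
        ((hmU (n+1)) (measurableSet_singleton k)).inter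
          ((hmη (n+1)) (measurableSet_singleton false))
      have hptw : ∀ ω, Z k ω = A.indicator (fun _ => (1:ℝ)) ω
          - B.indicator (fun _ => (1:ℝ)) ω := by
        intro ω
        rw [hZ, he]
        by_cases h1 : U (n+1) ω = k <;> by_cases h2 : η (n+1) ω = true <;>
          simp [hA, hB, Set.indicator, h1, h2]
      have hPU : P {ω | U (n+1) ω = k} = ((n : ℕ) : ENNReal)⁻¹ := by
        have := hUunif (n+1) (by omega) k (by
          simp only [Nat.add_sub_cancel]
          exact hk)
        simpa using this
      have hPηt : P {ω | η (n+1) ω = true} = ENNReal.ofReal r := hηber (n+1) (by omega)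
      have hPηf : P {ω | η (n+1) ω = false} = ENNReal.ofReal (1 - r) := by
        have hc : {ω | η (n+1) ω = false} = {ω | η (n+1) ω = true}ᶜ := by
          ext ω; simp
        have hms : MeasurableSet {ω | η (n+1) ω = true} :=
          (hmη (n+1)) (measurableSet_singleton true)
        have hmc := measure_compl hms (measure_ne_top P _)
        rw [hc, hmc, measure_univ, hPηt, ← ENNReal.ofReal_one, ← ENNReal.ofReal_sub _ hr]
      have hηsetf : MeasurableSet[mηc (n+1)] {ω | η (n+1) ω = false} := by
        refine ⟨{false}, (Set.to_countable _).measurableSet, ?_⟩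
        ext ω; simp
      have hPA : P A = ((n : ℕ) : ENNReal)⁻¹ * ENNReal.ofReal r := by
        rw [hA, (Indep_iff _ _ _).mp (hUηind (n+1)) _ _ (hUset k) hηset, hPU, hPηt]
      have hPB : P B = ((n : ℕ) : ENNReal)⁻¹ * ENNReal.ofReal (1 - r) := by
        rw [hB, (Indep_iff _ _ _).mp (hUηind (n+1)) _ _ (hUset k) hηsetf, hPU, hPηf]
      have hintA : Integrable (A.indicator (fun _ => (1:ℝ))) P :=
        (integrable_const (1:ℝ)).indicator hAm
      have hintB : Integrable (B.indicator (fun _ => (1:ℝ))) P :=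
        (integrable_const (1:ℝ)).indicator hBm
      have : ∫ ω, Z k ω ∂P = (P A).toReal - (P B).toReal := by
        rw [integral_congr_ae (Filter.Eventually.of_forall hptw), integral_sub hintA hintB,
          integral_indicator_const _ hAm, integral_indicator_const _ hBm]
        simp [measureReal_def]
      rw [this, hPA, hPB]
      rw [ENNReal.toReal_mul, ENNReal.toReal_mul, ENNReal.toReal_inv,
        ENNReal.toReal_natCast, ENNReal.toReal_ofReal hr,
        ENNReal.toReal_ofReal (by linarith)]
      field_simp
      ring
    -- cross term
    have hW : ∀ k, Measurable[F n] (fun ω => SY n ω * Y k ω) → True := fun _ _ => trivial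
    have hcross : ∫ ω, SY n ω * Y (n+1) ω ∂P = ((2*r - 1) / n) * ∫ ω, (SY n ω)^2 ∂P := by
      have hae2 : (fun ω => SY n ω * Y (n+1) ω) =ᵐ[P]
          (fun ω => ∑ k ∈ Finset.Icc 1 n, Z k ω * (SY n ω * Y k ω)) := by
        filter_upwards [hae] with ω hω
        obtain ⟨hu1, hu2⟩ := hω (n+1) (by omega)
        simp only [Nat.add_sub_cancel] at hu2
        have hmem : U (n+1) ω ∈ Finset.Icc 1 n := Finset.mem_Icc.mpr ⟨hu1, hu2⟩
        rw [Finset.sum_eq_single_of_mem (U (n+1) ω) hmem (fun b _ hb => by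
          rw [hZ]
          simp only
          rw [if_neg (fun h => hb h.symm)]
          ring)]
        have hYn1 : Y (n+1) ω = e ω * Y (U (n+1) ω) ω := by
          rw [hY, erwY_def, if_pos (by omega : 2 ≤ n+1),
            dif_pos ⟨hu1, by omega⟩, he, ← hY]
        have hZu : Z (U (n+1) ω) ω = e ω := by rw [hZ]; simp
        rw [hYn1, hZu]
        ring
      rw [integral_congr_ae hae2]
      have hterm_int : ∀ k ∈ Finset.Icc 1 n,
          Integrable (fun ω => Z k ω * (SY n ω * Y k ω)) P := by
        intro k hk
        refine hint _ ((n : ℝ)) (((hZM k).mul ((hSYM n).mul (hYM k)))) (fun ω => ?_)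
        calc |Z k ω * (SY n ω * Y k ω)| = |Z k ω| * (|SY n ω| * |Y k ω|) := by
              rw [abs_mul, abs_mul]
          _ ≤ 1 * ((n : ℝ) * 1) := by
              refine mul_le_mul (hZb k ω) (mul_le_mul (hSb n ω) (erwY_abs U η k ω)
                (abs_nonneg _) (by positivity)) (by positivity) (by norm_num)
          _ = (n : ℝ) := by ring
      rw [integral_finset_sum _ hterm_int]
      have hmain : ∀ k ∈ Finset.Icc 1 n,
          ∫ ω, Z k ω * (SY n ω * Y k ω) ∂P
            = ((2*r - 1) / n) * ∫ ω, SY n ω * Y k ω ∂P := by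
        intro k hk
        have hWm : Measurable[F n] (fun ω => SY n ω * Y k ω) :=
          (hSYF n).mul ((hYF k).mono (hFmono (Finset.mem_Icc.mp hk).2) le_rfl)
        have hZW : IndepFun (Z k) (fun ω => SY n ω * Y k ω) P :=
          indep_of_indep_of_le_right
            (indep_of_indep_of_le_left (hIndep n) (Measurable.comap_le (hZm k)))
            (Measurable.comap_le hWm)
        have hZint' : Integrable (Z k) P := hint _ 1 (hZM k) (hZb k)
        have hWint : Integrable (fun ω => SY n ω * Y k ω) P := by
          refine hint _ ((n : ℝ)) ((hSYM n).mul (hYM k)) (fun ω => ?_)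
          calc |SY n ω * Y k ω| = |SY n ω| * |Y k ω| := abs_mul _ _
            _ ≤ (n : ℝ) * 1 := mul_le_mul (hSb n ω) (erwY_abs U η k ω)
                (abs_nonneg _) (by positivity)
            _ = (n : ℝ) := by ring
        have := IndepFun.integral_mul_eq_mul_integral hZW hZint'.aestronglyMeasurable hWint.aestronglyMeasurable
        rw [hZint k hk] at this
        exact this
      rw [Finset.sum_congr rfl hmain, ← Finset.mul_sum,
        ← integral_finset_sum _ (fun k hk => by
          refine hint _ ((n : ℝ)) ((hSYM n).mul (hYM k)) (fun ω => ?_)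
          calc |SY n ω * Y k ω| = |SY n ω| * |Y k ω| := abs_mul _ _
            _ ≤ (n : ℝ) * 1 := mul_le_mul (hSb n ω) (erwY_abs U η k ω)
                (abs_nonneg _) (by positivity)
            _ = (n : ℝ) := by ring)]
      congr 1
      refine integral_congr_ae (Filter.Eventually.of_forall (fun ω => ?_))
      show (∑ k ∈ Finset.Icc 1 n, SY n ω * Y k ω) = SY n ω ^ 2
      rw [← Finset.mul_sum, show (∑ k ∈ Finset.Icc 1 n, Y k ω) = SY n ω from rfl]
      ring
    -- expansion of the square
    have hsplit : ∀ ω, SY (n+1) ω = SY n ω + Y (n+1) ω := by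
      intro ω
      rw [hSY]
      exact Finset.sum_Icc_succ_top (by omega) _
    have hsq : ∀ ω, (SY (n+1) ω)^2 = (SY n ω)^2 + (2*(SY n ω * Y (n+1) ω) + 1) := by
      intro ω
      rw [hsplit ω]
      have h2 := erwY_sq U η (n+1) ω
      rw [hY] at *
      nlinarith [h2]
    have hintS2 : Integrable (fun ω => (SY n ω)^2) P := by
      refine hint _ ((n : ℝ)^2) ((hSYM n).pow_const 2) (fun ω => ?_)
      rw [abs_pow]
      exact pow_le_pow_left₀ (abs_nonneg _) (hSb n ω) 2
    have hintCr : Integrable (fun ω => 2*(SY n ω * Y (n+1) ω)) P := by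
      refine hint _ (2*(n : ℝ)) ((measurable_const.mul ((hSYM n).mul (hYM (n+1)))))
        (fun ω => ?_)
      rw [abs_mul, abs_mul]
      have : |(2:ℝ)| = 2 := by norm_num
      rw [this]
      have h1 : |SY n ω| * |Y (n+1) ω| ≤ (n:ℝ) * 1 :=
        mul_le_mul (hSb n ω) (erwY_abs U η (n+1) ω) (abs_nonneg _) (by positivity)
      nlinarith
    calc ∫ ω, (SY (n+1) ω)^2 ∂P
        = ∫ ω, ((SY n ω)^2 + (2*(SY n ω * Y (n+1) ω) + 1)) ∂P :=
          integral_congr_ae (Filter.Eventually.of_forall (fun ω => hsq ω))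
      _ = (∫ ω, (SY n ω)^2 ∂P) + ((∫ ω, 2*(SY n ω * Y (n+1) ω) ∂P) + 1) := by
          have hg : Integrable (fun ω => 2*(SY n ω * Y (n+1) ω) + 1) P :=
            hintCr.add (integrable_const 1)
          rw [integral_add hintS2 hg, integral_add hintCr (integrable_const 1)]
          simp
      _ = (∫ ω, (SY n ω)^2 ∂P) + (2*(((2*r - 1) / n) * ∫ ω, (SY n ω)^2 ∂P) + 1) := by
          rw [integral_const_mul, hcross]
      _ = (((n : ℝ) + 4*r - 2) / n) * ∫ ω, (SY n ω)^2 ∂P + 1 := by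
          field_simp
          ring
  constructor
  · intro n hn
    induction n, hn using Nat.le_induction with
    | base => simpa [hT 1] using hbase
    | succ n hn ih =>
      rw [hT (n+1), hrec n hn, ← hT n, ih]
      -- algebraic identity on the RHS sums
      simp only [Nat.add_sub_cancel]
      rw [Finset.sum_Icc_succ_top (show 1 ≤ n+1 by omega),
        show Finset.Icc (n+1) n = ∅ from Finset.Icc_eq_empty (by omega),
        Finset.prod_empty]
      congr 1
      rw [Finset.mul_sum]
      refine Finset.sum_congr rfl (fun k hk => ?_)
      have hk2 := (Finset.mem_Icc.mp hk).2
      have h1 : Finset.Icc k n = Finset.Icc k ((n-1)+1) := by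
        congr 1
        omega
      rw [h1, Finset.prod_Icc_succ_top (by omega : k ≤ (n-1)+1),
        show (n-1)+1 = n from by omega]
      ring
  · intro n hn
    rw [hT (n+1), hT n]
    exact hrec n hn
end

section
/- Almost surely, for every n ≥ 1, T_n = Σ_{k=1}^n W_{nk}·ξ_k, where T_n is the unbalanced step-reinforced random walk and W_{nk} are the percolation cluster weights constructed from the same randomness (U_n), (ε_n), (η_n). -/
open MeasureTheory ProbabilityTheory Filter Finset Topology ENNReal
open scoped Classical

theorem stmt18
    {Ω : Type*} [MeasurableSpace Ω] (P : Measure Ω) [IsProbabilityMeasure P]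
    (p r : ℝ) (hp : 0 ≤ p) (hp1 : p ≤ 1) (hr : 0 ≤ r) (hr1 : r ≤ 1)
    (ξ : ℕ → Ω → ℝ) (U : ℕ → Ω → ℕ) (ε η : ℕ → Ω → Bool)
    (hmξ : ∀ n, Measurable (ξ n)) (hmU : ∀ n, Measurable (U n))
    (hmε : ∀ n, Measurable (ε n)) (hmη : ∀ n, Measurable (η n))
    -- ξ i.i.d.
    (hξindep : iIndepFun ξ P)
    (hξid : ∀ n, IdentDistrib (ξ n) (ξ 1) P P)
    -- U_n independent, uniform on {1,…,n−1}
    (hUindep : iIndepFun U P)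
    (hUunif : ∀ n, 2 ≤ n → ∀ k ∈ Finset.Icc 1 (n-1),
      P {ω | U n ω = k} = (((n - 1 : ℕ) : ENNReal))⁻¹)
    -- ε i.i.d. Bernoulli(p)
    (hεindep : iIndepFun ε P)
    (hεber : ∀ n, 2 ≤ n → P {ω | ε n ω = true} = ENNReal.ofReal p)
    -- η i.i.d. Bernoulli(r)
    (hηindep : iIndepFun η P)
    (hηber : ∀ n, 2 ≤ n → P {ω | η n ω = true} = ENNReal.ofReal r)
    -- the four sequences are mutually independent
    (hmut : iIndep
      ![⨆ n, MeasurableSpace.comap (ξ n) inferInstance,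
        ⨆ n, MeasurableSpace.comap (U n) inferInstance,
        ⨆ n, MeasurableSpace.comap (ε n) inferInstance,
        ⨆ n, MeasurableSpace.comap (η n) inferInstance] P)
    -- the unbalanced step-reinforced random walk
    (X : ℕ → Ω → ℝ) (T : ℕ → Ω → ℝ)
    (hX1 : ∀ ω, X 1 ω = ξ 1 ω)
    (hXrec : ∀ n, 2 ≤ n → ∀ ω, X n ω =
      if ε n ω then (if η n ω then X (U n ω) ω else -X (U n ω) ω) else ξ n ω)
    (hT : ∀ n ω, T n ω = ∑ k ∈ Finset.Icc 1 n, X k ω)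
    -- rt i ω is the root of the percolation cluster containing vertex i
    (rt : ℕ → Ω → ℕ)
    (hrt1 : ∀ ω, rt 1 ω = 1)
    (hrt : ∀ n, 2 ≤ n → ∀ ω, rt n ω = if ε n ω then rt (U n ω) ω else n)
    -- V i ω is the ±1 value assigned to vertex i
    (V : ℕ → Ω → ℝ)
    (hV1 : ∀ ω, V 1 ω = 1)
    (hV : ∀ n, 2 ≤ n → ∀ ω, V n ω =
      if ε n ω then (if η n ω then V (U n ω) ω else -V (U n ω) ω) else 1)
    -- W n j ω : sum of the values over the cluster rooted at j (0 if j is not a root)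
    (W : ℕ → ℕ → Ω → ℝ)
    (hW : ∀ n j ω, W n j ω =
      if j = 1 ∨ ε j ω = false
      then ∑ i ∈ Finset.Icc 1 n, (if rt i ω = j then V i ω else 0) else 0) :
    ∀ᵐ ω ∂P, ∀ n : ℕ, 1 ≤ n →
      T n ω = ∑ k ∈ Finset.Icc 1 n, W n k ω * ξ k ω := by
  -- Step 1: almost surely, U n ω ∈ Icc 1 (n-1) for all n ≥ 2
  have h1 : ∀ n, 2 ≤ n → P {ω | U n ω ∈ Finset.Icc 1 (n-1)}ᶜ = 0 := by
    intro n hn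
    have hmeas : ∀ k : ℕ, MeasurableSet {ω | U n ω = k} := fun k =>
      hmU n (measurableSet_singleton k)
    have hset : {ω | U n ω ∈ Finset.Icc 1 (n-1)} =
        ⋃ k ∈ Finset.Icc 1 (n-1), {ω | U n ω = k} := by
      ext ω; simp
    have hdisj : (Finset.Icc 1 (n-1) : Set ℕ).PairwiseDisjoint
        (fun k => {ω | U n ω = k}) := by
      intro a _ b _ hab
      refine Set.disjoint_left.mpr ?_
      intro ω ha hb
      exact hab (ha.symm.trans hb)
    have hP : P {ω | U n ω ∈ Finset.Icc 1 (n-1)} = 1 := by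
      rw [hset, measure_biUnion_finset hdisj (fun k _ => hmeas k)]
      have : ∀ k ∈ Finset.Icc 1 (n-1), P {ω | U n ω = k}
          = (((n - 1 : ℕ) : ENNReal))⁻¹ := hUunif n hn
      rw [Finset.sum_congr rfl this, Finset.sum_const, Nat.card_Icc]
      have hne : ((n - 1 : ℕ) : ENNReal) ≠ 0 := by
        simp only [ne_eq, Nat.cast_eq_zero]
        omega
      have : n - 1 + 1 - 1 = n - 1 := by omega
      rw [this, nsmul_eq_mul]
      exact ENNReal.mul_inv_cancel hne (by simp)
    have hms : MeasurableSet {ω | U n ω ∈ Finset.Icc 1 (n-1)} := by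
      rw [hset]
      exact MeasurableSet.biUnion (Finset.Icc 1 (n-1)).countable_toSet
        (fun k _ => hmeas k)
    rw [measure_compl hms (measure_ne_top P _), hP, measure_univ, tsub_self]
  have hae : ∀ᵐ ω ∂P, ∀ n, 2 ≤ n → U n ω ∈ Finset.Icc 1 (n-1) := by
    rw [ae_all_iff]
    intro n
    by_cases hn : 2 ≤ n
    · have := h1 n hn
      filter_upwards [measure_eq_zero_iff_ae_notMem.mp this] with ω hω
      intro _
      simpa using hω
    · filter_upwards with ω h
      exact absurd h hn
  filter_upwards [hae] with ω hω
  intro n hn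
  -- Step 2: key pointwise claim by strong induction
  have key : ∀ k, 1 ≤ k → X k ω = V k ω * ξ (rt k ω) ω ∧ 1 ≤ rt k ω ∧
      rt k ω ≤ k ∧ (rt k ω = 1 ∨ ε (rt k ω) ω = false) := by
    intro k
    induction k using Nat.strong_induction_on with
    | _ k ih =>
      intro hk
      rcases eq_or_lt_of_le hk with h1' | h2
      · -- k = 1
        have hk1 : k = 1 := h1'.symm
        subst hk1
        refine ⟨?_, ?_, ?_, Or.inl (hrt1 ω)⟩
        · rw [hX1 ω, hV1 ω, hrt1 ω]; ring
        · rw [hrt1 ω]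
        · rw [hrt1 ω]
      · -- 2 ≤ k
        have hk2 : 2 ≤ k := h2
        have hm := hω k hk2
        rw [Finset.mem_Icc] at hm
        have hmlt : U k ω < k := by omega
        obtain ⟨hXm, h1m, h2m, hroot⟩ := ih (U k ω) hmlt hm.1
        rw [hXrec k hk2 ω, hrt k hk2 ω, hV k hk2 ω]
        cases hε : ε k ω with
        | false =>
          simp only [Bool.false_eq_true, if_false]
          exact ⟨by ring, by omega, le_refl k, Or.inr hε⟩
        | true =>
          simp only [if_true]
          cases hη : η k ω with
          | false =>
            simp only [Bool.false_eq_true, if_false]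
            exact ⟨by rw [hXm]; ring, h1m, by omega, hroot⟩
          | true =>
            simp only [if_true]
            exact ⟨hXm, h1m, by omega, hroot⟩
  -- Step 3: rewrite W
  have hWeq : ∀ j, W n j ω = ∑ i ∈ Finset.Icc 1 n,
      (if rt i ω = j then V i ω else 0) := by
    intro j
    rw [hW]
    by_cases hj : j = 1 ∨ ε j ω = false
    · rw [if_pos hj]
    · rw [if_neg hj]
      symm
      apply Finset.sum_eq_zero
      intro i hi
      rw [Finset.mem_Icc] at hi
      have hr' := (key i hi.1).2.2.2
      rw [if_neg]
      intro h
      exact hj (h ▸ hr')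
  -- Step 4: the sum manipulation
  rw [hT]
  have hXsum : ∀ k ∈ Finset.Icc 1 n, X k ω = V k ω * ξ (rt k ω) ω := by
    intro k hk
    rw [Finset.mem_Icc] at hk
    exact (key k hk.1).1
  rw [Finset.sum_congr rfl hXsum]
  calc ∑ k ∈ Finset.Icc 1 n, V k ω * ξ (rt k ω) ω
      = ∑ k ∈ Finset.Icc 1 n, ∑ j ∈ Finset.Icc 1 n,
          (if rt k ω = j then V k ω * ξ j ω else 0) := by
        apply Finset.sum_congr rfl
        intro k hk
        rw [Finset.mem_Icc] at hk
        obtain ⟨_, h1k, h2k, _⟩ := key k hk.1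
        have hmem : rt k ω ∈ Finset.Icc 1 n := Finset.mem_Icc.mpr ⟨h1k, le_trans h2k hk.2⟩
        rw [Finset.sum_ite_eq (Finset.Icc 1 n) (rt k ω)
          (fun j => V k ω * ξ j ω), if_pos hmem]
    _ = ∑ j ∈ Finset.Icc 1 n, ∑ k ∈ Finset.Icc 1 n,
          (if rt k ω = j then V k ω * ξ j ω else 0) := Finset.sum_comm
    _ = ∑ j ∈ Finset.Icc 1 n, W n j ω * ξ j ω := by
        apply Finset.sum_congr rfl
        intro j _
        rw [hWeq j, Finset.sum_mul]
        apply Finset.sum_congr rfl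
        intro k _
        rw [ite_mul, zero_mul]
end
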